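/- arXiv:1712.01716 — 2 statements merged into one kernel-verified Lean document; each statement's English description precedes it below -/
import Mathlib

section
/- Let d, A ∈ ℝ^m_{>0}, let θ_i : ℤ → ℝ_{≥0} satisfy θ_i(x) = 0 for x ≤ 0, θ_i(j) > 0 for all integers j ≥ 1, and lim_{x→∞} θ_i(x)/x^{d_i} = A_i, and let c ∈ ℝ^m_{>0}. Then for all sufficiently large V > 0 both sums below are finite, and lim_{V→∞} [ (1/V) ln( ∑_{x ∈ ℤ^m_{≥0}} ∏_{i=1}^m (V^{d_i} c_i)^{x_i} / ∏_{j=1}^{x_i} θ_i(j) ) − (1/V) ln( ∑_{x ∈ ℤ^m_{≥0}} ∏_{i=1}^m (V^{d_i} c_i A_i^{−1})^{x_i}/(x_i!)^{d_i} ) ] = 0. -/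
set_option maxHeartbeats 1000000

open Finset Filter Real


/-- `n^n e^{-n} ≤ n!` -/
lemma fact_ge (n : ℕ) : ((n:ℝ))^n * Real.exp (-(n:ℝ)) ≤ n.factorial := by
  have h : (n:ℝ)^n / n.factorial ≤ Real.exp n := by
    refine le_trans ?_ (Real.sum_le_exp_of_nonneg (x := (n:ℝ)) (by positivity) (n+1))
    exact Finset.single_le_sum (f := fun i => (n:ℝ)^i / i.factorial) (fun i _ => by positivity) (Finset.self_mem_range_succ n)
  rw [div_le_iff₀ (by positivity)] at h
  rw [Real.exp_neg, mul_inv_le_iff₀ (by positivity)]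
  linarith [h]

/-- `s - s log s ≤ 1` for `s > 0` -/
lemma s_one_sub_log (s : ℝ) (hs : 0 < s) : s - s * Real.log s ≤ 1 := by
  have h := Real.log_le_sub_one_of_pos (x := s⁻¹) (by positivity)
  rw [Real.log_inv] at h
  have : 1 - s⁻¹ ≤ Real.log s := by linarith
  nlinarith [mul_le_mul_of_nonneg_left this hs.le, mul_inv_cancel₀ hs.ne']

/-- `e ≤ (1+1/n)^{n+1}`, in the form `e * n^{n+1} ≤ (n+1)^{n+1}` -/
lemma exp_one_le (n : ℕ) (hn : 1 ≤ n) : Real.exp 1 * (n:ℝ)^(n+1) ≤ ((n:ℝ)+1)^(n+1) := by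
  have hn' : (0:ℝ) < n := by exact_mod_cast hn
  have h := Real.log_le_sub_one_of_pos (x := (n:ℝ)/((n:ℝ)+1)) (by positivity)
  have hlog : (1:ℝ)/((n:ℝ)+1) ≤ Real.log (((n:ℝ)+1)/n) := by
    rw [Real.log_div (by positivity) (by positivity)]
    rw [Real.log_div (by positivity) (by positivity)] at h
    have : (n:ℝ)/((n:ℝ)+1) - 1 = -(1/((n:ℝ)+1)) := by field_simp; ring
    rw [this] at h; linarith
  have h2 : (1:ℝ) ≤ ((n:ℝ)+1) * Real.log (((n:ℝ)+1)/n) := by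
    calc (1:ℝ) = ((n:ℝ)+1) * (1/((n:ℝ)+1)) := by field_simp
    _ ≤ _ := by apply mul_le_mul_of_nonneg_left hlog (by positivity)
  have h3 : Real.exp 1 ≤ (((n:ℝ)+1)/n)^(n+1) := by
    rw [← Real.exp_log (x := (((n:ℝ)+1)/n)^(n+1)) (by positivity), Real.log_pow]
    apply Real.exp_le_exp.2
    calc (1:ℝ) ≤ ((n:ℝ)+1) * Real.log (((n:ℝ)+1)/n) := h2
    _ ≤ _ := by
        push_cast
        nlinarith [Real.log_nonneg (show 1 ≤ ((n:ℝ)+1)/n by rw [le_div_iff₀ hn']; linarith)]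
  calc Real.exp 1 * (n:ℝ)^(n+1) ≤ (((n:ℝ)+1)/n)^(n+1) * (n:ℝ)^(n+1) := by
        apply mul_le_mul_of_nonneg_right h3 (by positivity)
  _ = ((n:ℝ)+1)^(n+1) := by rw [← mul_pow]; field_simp

/-- `n! ≤ e * n^{n+1} * e^{-n}` for `n ≥ 1` -/
lemma fact_le (n : ℕ) (hn : 1 ≤ n) : (n.factorial : ℝ) ≤ Real.exp 1 * (n:ℝ)^(n+1) * Real.exp (-(n:ℝ)) := by
  induction n with
  | zero => omega
  | succ k ih =>
    rcases Nat.lt_or_ge k 1 with h1 | hk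
    · have hk0 : k = 0 := by omega
      subst hk0
      norm_num
      rw [← Real.exp_add]; norm_num
    · have ih' := ih hk
      have hstep := exp_one_le k hk
      have hkpos : (0:ℝ) < k := by exact_mod_cast hk
      have hfs : ((k+1).factorial : ℝ) = ((k:ℝ)+1) * k.factorial := by
        rw [Nat.factorial_succ]; push_cast; ring
      rw [hfs]
      have step1 : ((k:ℝ)+1) * (k.factorial:ℝ) ≤ ((k:ℝ)+1) * (Real.exp 1 * (k:ℝ)^(k+1) * Real.exp (-(k:ℝ))) :=
        mul_le_mul_of_nonneg_left ih' (by positivity)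
      have step2 : ((k:ℝ)+1) * (Real.exp 1 * (k:ℝ)^(k+1) * Real.exp (-(k:ℝ)))
          ≤ Real.exp 1 * ((k:ℝ)+1)^(k+1+1) * Real.exp (-((k:ℝ)+1)) := by
        have hexp : Real.exp (-(k:ℝ)) = Real.exp 1 * Real.exp (-((k:ℝ)+1)) := by
          rw [← Real.exp_add]; ring_nf
        rw [hexp]
        have : ((k:ℝ)+1)^(k+1+1) = ((k:ℝ)+1)^(k+1) * ((k:ℝ)+1) := by ring
        rw [this]
        have hmid : Real.exp 1 * (k:ℝ)^(k+1) * ((k:ℝ)+1) ≤ ((k:ℝ)+1)^(k+1) * ((k:ℝ)+1) :=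
          mul_le_mul_of_nonneg_right hstep (by positivity)
        calc ((k:ℝ)+1) * (Real.exp 1 * (k:ℝ)^(k+1) * (Real.exp 1 * Real.exp (-((k:ℝ)+1))))
            = (Real.exp 1 * (k:ℝ)^(k+1) * ((k:ℝ)+1)) * (Real.exp 1 * Real.exp (-((k:ℝ)+1))) := by ring
          _ ≤ (((k:ℝ)+1)^(k+1) * ((k:ℝ)+1)) * (Real.exp 1 * Real.exp (-((k:ℝ)+1))) :=
              mul_le_mul_of_nonneg_right hmid (by positivity)
          _ = Real.exp 1 * (((k:ℝ)+1)^(k+1) * ((k:ℝ)+1)) * Real.exp (-((k:ℝ)+1)) := by ring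
      push_cast
      push_cast at step1 step2
      linarith


lemma term_succ (l d : ℝ) (x : ℕ) :
    l ^ (x+1) / ((x+1).factorial : ℝ) ^ d = (l ^ x / (x.factorial : ℝ) ^ d) * (l / ((x:ℝ)+1) ^ d) := by
  have h : (((x+1).factorial : ℕ) : ℝ) = ((x:ℝ)+1) * (x.factorial : ℝ) := by
    rw [Nat.factorial_succ]; push_cast; ring
  rw [h, Real.mul_rpow (by positivity) (by positivity)]
  have h1 : (((x:ℝ))+1) ^ d ≠ 0 := by positivity
  have h2 : (x.factorial : ℝ) ^ d ≠ 0 := by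
    have : (0:ℝ) < (x.factorial:ℝ) := by exact_mod_cast x.factorial_pos
    positivity
  field_simp
  ring

lemma Zsummable' (l d : ℝ) (hd : 0 < d) (hl : 0 < l) :
    Summable (fun x : ℕ => l ^ x / (x.factorial : ℝ) ^ d) := by
  apply summable_of_ratio_norm_eventually_le (r := 1/2) (by norm_num)
  have h1 : Tendsto (fun x : ℕ => ((x:ℝ)+1) ^ d) atTop atTop := by
    apply (tendsto_rpow_atTop hd).comp
    exact tendsto_atTop_add_const_right _ _ tendsto_natCast_atTop_atTop
  filter_upwards [h1.eventually_ge_atTop (2*l)] with x hx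
  rw [term_succ]
  have ht : 0 ≤ l ^ x / (x.factorial : ℝ) ^ d := by
    have : (0:ℝ) < (x.factorial:ℝ) := by exact_mod_cast x.factorial_pos
    positivity
  rw [norm_mul]
  have hr : ‖l / ((x:ℝ)+1) ^ d‖ ≤ 1/2 := by
    rw [Real.norm_of_nonneg (by positivity)]
    rw [div_le_iff₀ (by positivity)]
    linarith
  calc ‖l ^ x / (x.factorial : ℝ) ^ d‖ * ‖l / ((x:ℝ)+1) ^ d‖
      ≤ ‖l ^ x / (x.factorial : ℝ) ^ d‖ * (1/2) := by
        apply mul_le_mul_of_nonneg_left hr (norm_nonneg _)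
    _ = 1/2 * ‖l ^ x / (x.factorial : ℝ) ^ d‖ := by ring


lemma key_ineq (d l u : ℝ) (hd : 0 < d) (hl : 0 < l) (hu : 0 < u) :
    u * Real.log l - d * u * Real.log u + d * u ≤ d * l ^ (1/d) := by
  set L := l ^ (1/d) with hL
  have hLpos : 0 < L := Real.rpow_pos_of_pos hl _
  set s := u / L with hs
  have hspos : 0 < s := by positivity
  have hu_eq : u = s * L := by rw [hs, div_mul_cancel₀ u hLpos.ne']
  have hlogL : Real.log L = (1/d) * Real.log l := Real.log_rpow hl _
  have hlogu : Real.log u = Real.log s + (1/d) * Real.log l := by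
    rw [hu_eq, Real.log_mul hspos.ne' hLpos.ne', hlogL]
  have h1 : d * L * (s - s * Real.log s) ≤ d * L * 1 :=
    mul_le_mul_of_nonneg_left (s_one_sub_log s hspos) (by positivity)
  have h2 : u * Real.log l - d * u * Real.log u + d * u = d * L * (s - s * Real.log s) := by
    have hlogs : Real.log s = Real.log u - Real.log L := by
      rw [hs]; exact Real.log_div hu.ne' hLpos.ne'
    rw [hs, hlogs, hlogL]
    field_simp
    ring
  rw [h2]; linarith

lemma termA (d l : ℝ) (hd : 0 < d) (hl : 1 ≤ l) (x : ℕ) :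
    l ^ x / ((x.factorial : ℝ)) ^ d ≤ Real.exp (d * l ^ (1/d)) := by
  have hl0 : (0:ℝ) < l := lt_of_lt_of_le one_pos hl
  have hL : (0:ℝ) ≤ d * l ^ (1/d) := by positivity
  rcases Nat.eq_zero_or_pos x with h0 | hx
  · subst h0
    simp only [pow_zero, Nat.factorial_zero, Nat.cast_one, Real.one_rpow, div_one]
    exact Real.one_le_exp hL
  · have hxpos : (0:ℝ) < x := by exact_mod_cast hx
    have hb : (0:ℝ) < ((x:ℝ))^x * Real.exp (-(x:ℝ)) := by positivity
    have hfd : (((x:ℝ))^x * Real.exp (-(x:ℝ)))^d ≤ ((x.factorial : ℝ))^d :=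
      Real.rpow_le_rpow hb.le (fact_ge x) hd.le
    have step1 : l ^ x / ((x.factorial : ℝ)) ^ d ≤ l ^ x / (((x:ℝ))^x * Real.exp (-(x:ℝ)))^d := by
      apply div_le_div_of_nonneg_left (by positivity) (by positivity) hfd
    refine step1.trans ?_
    have e1 : l ^ x = Real.exp ((x:ℝ) * Real.log l) := by
      rw [Real.exp_nat_mul, Real.exp_log hl0]
    have e2 : (((x:ℝ))^x * Real.exp (-(x:ℝ)))^d
        = Real.exp (d * ((x:ℝ) * Real.log x - x)) := by
      rw [Real.rpow_def_of_pos hb]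
      congr 1
      rw [Real.log_mul (by positivity) (Real.exp_ne_zero _), Real.log_pow, Real.log_exp]
      ring
    rw [e1, e2, ← Real.exp_sub, Real.exp_le_exp]
    have := key_ineq d l (x:ℝ) hd hl0 hxpos
    nlinarith [this]

lemma term_succ' (l d : ℝ) (x : ℕ) :
    l ^ (x+1) / ((x+1).factorial : ℝ) ^ d = (l ^ x / (x.factorial : ℝ) ^ d) * (l / ((x:ℝ)+1) ^ d) := by
  have h : (((x+1).factorial : ℕ) : ℝ) = ((x:ℝ)+1) * (x.factorial : ℝ) := by
    rw [Nat.factorial_succ]; push_cast; ring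
  rw [h, Real.mul_rpow (by positivity) (by positivity)]
  have h2 : (x.factorial : ℝ) ^ d ≠ 0 := by
    have : (0:ℝ) < (x.factorial:ℝ) := by exact_mod_cast x.factorial_pos
    positivity
  have h1 : (((x:ℝ))+1) ^ d ≠ 0 := by positivity
  field_simp
  ring

lemma termB (d l : ℝ) (hd : 0 < d) (hl : 0 < l) (x0 : ℕ) (hx0 : 2*l ≤ ((x0:ℝ))^d) (k : ℕ) :
    l^(x0+k) / (((x0+k).factorial : ℝ))^d ≤ (l^x0 / ((x0.factorial:ℝ))^d) * (1/2)^k := by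
  induction k with
  | zero => simp
  | succ j ih =>
    have hfp : (0:ℝ) < ((x0+j).factorial : ℝ) := by exact_mod_cast (x0+j).factorial_pos
    have hx0pos : (0:ℝ) < (x0:ℝ)^d := lt_of_lt_of_le (by linarith) hx0
    have hx0' : (0:ℝ) < x0 := by
      by_contra h
      push_neg at h
      have : (x0:ℝ) = 0 := le_antisymm h (by positivity)
      rw [this, Real.zero_rpow hd.ne'] at hx0pos
      exact lt_irrefl _ hx0pos
    have hmono : ((x0:ℝ))^d ≤ (((x0+j:ℕ):ℝ)+1)^d := by
      apply Real.rpow_le_rpow (by positivity) _ hd.le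
      have hj : (0:ℝ) ≤ (j:ℝ) := Nat.cast_nonneg j
      push_cast; linarith
    have hratio : l / (((x0+j:ℕ):ℝ)+1)^d ≤ 1/2 := by
      rw [div_le_iff₀ (lt_of_lt_of_le hx0pos hmono)]
      calc l = (1/2) * (2*l) := by ring
      _ ≤ (1/2) * ((x0:ℝ))^d := by linarith
      _ ≤ _ := by linarith [hmono]
    have heq : x0 + (j+1) = (x0+j) + 1 := by omega
    rw [heq, term_succ']
    calc (l ^ (x0+j) / ((x0+j).factorial : ℝ) ^ d) * (l / (((x0+j:ℕ):ℝ)+1) ^ d)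
        ≤ ((l^x0 / ((x0.factorial:ℝ))^d) * (1/2)^j) * (1/2) := by
          apply mul_le_mul ih hratio (by positivity)
          have hfp0 : (0:ℝ) < (x0.factorial : ℝ) := by exact_mod_cast x0.factorial_pos
          positivity
    _ = (l^x0 / ((x0.factorial:ℝ))^d) * (1/2)^(j+1) := by ring

lemma Zterm_nonneg (l d : ℝ) (hl : 0 < l) (x : ℕ) : 0 ≤ l ^ x / (x.factorial : ℝ) ^ d := by
  have : (0:ℝ) < (x.factorial:ℝ) := by exact_mod_cast x.factorial_pos
  positivity

lemma Zge_one (l d : ℝ) (hd : 0 < d) (hl : 0 < l) :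
    1 ≤ ∑' x : ℕ, l ^ x / (x.factorial : ℝ) ^ d := by
  have h := Summable.le_tsum (Zsummable' l d hd hl) 0 (fun b _ => Zterm_nonneg l d hl b)
  simpa using h

lemma Zupper (d l : ℝ) (hd : 0 < d) (hl : 1 ≤ l) :
    ∑' x : ℕ, l ^ x / (x.factorial : ℝ) ^ d
      ≤ ((2*l) ^ (1/d) + 3) * Real.exp (d * l ^ (1/d)) := by
  have hl0 : (0:ℝ) < l := lt_of_lt_of_le one_pos hl
  set E := Real.exp (d * l ^ (1/d)) with hE
  have hEpos : 0 < E := Real.exp_pos _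
  set x0 := ⌈(2*l) ^ (1/d)⌉₊ with hx0
  have h2l : (0:ℝ) ≤ (2*l)^(1/d) := by positivity
  have hx0d : 2*l ≤ ((x0:ℝ))^d := by
    have h1 : (2*l)^(1/d) ≤ (x0:ℝ) := Nat.le_ceil _
    calc 2*l = ((2*l)^(1/d))^d := by
          rw [one_div, Real.rpow_inv_rpow (by positivity) hd.ne']
    _ ≤ ((x0:ℝ))^d := Real.rpow_le_rpow h2l h1 hd.le
  have hsum := Zsummable' l d hd hl0
  rw [← Summable.sum_add_tsum_nat_add x0 hsum]
  have hhead : ∑ i ∈ Finset.range x0, l ^ i / (i.factorial : ℝ) ^ d ≤ (x0:ℝ) * E := by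
    calc ∑ i ∈ Finset.range x0, l ^ i / (i.factorial : ℝ) ^ d
        ≤ ∑ i ∈ Finset.range x0, E := Finset.sum_le_sum (fun i _ => termA d l hd hl i)
    _ = (x0:ℝ) * E := by rw [Finset.sum_const, Finset.card_range, nsmul_eq_mul]
  have htail : ∑' k : ℕ, l ^ (k + x0) / ((k + x0).factorial : ℝ) ^ d ≤ 2 * E := by
    have hptw : ∀ k : ℕ, l ^ (k + x0) / ((k + x0).factorial : ℝ) ^ d ≤ E * (1/2)^k := by
      intro k
      have h1 : l ^ (x0 + k) / ((x0 + k).factorial : ℝ) ^ d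
          ≤ (l^x0 / ((x0.factorial:ℝ))^d) * (1/2)^k := termB d l hd hl0 x0 hx0d k
      rw [add_comm x0 k] at h1
      refine h1.trans ?_
      apply mul_le_mul_of_nonneg_right (termA d l hd hl x0) (by positivity)
    have hgeo : Summable (fun k : ℕ => E * (1/2:ℝ)^k) :=
      (summable_geometric_of_lt_one (by norm_num) (by norm_num)).mul_left E
    calc ∑' k : ℕ, l ^ (k + x0) / ((k + x0).factorial : ℝ) ^ d
        ≤ ∑' k : ℕ, E * (1/2:ℝ)^k := by
          apply Summable.tsum_le_tsum hptw ((summable_nat_add_iff x0).2 hsum) hgeo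
    _ = E * 2 := by
        rw [tsum_mul_left, tsum_geometric_of_lt_one (by norm_num) (by norm_num)]
        norm_num
    _ = 2 * E := by ring
  have hx0le : (x0:ℝ) ≤ (2*l)^(1/d) + 1 := le_of_lt (Nat.ceil_lt_add_one h2l)
  calc ∑ i ∈ Finset.range x0, l ^ i / (i.factorial : ℝ) ^ d
        + ∑' k : ℕ, l ^ (k + x0) / ((k + x0).factorial : ℝ) ^ d
      ≤ (x0:ℝ) * E + 2 * E := by linarith
  _ ≤ ((2*l)^(1/d) + 1) * E + 2 * E := by nlinarith
  _ = ((2*l) ^ (1/d) + 3) * E := by ring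

lemma Zlower (d l : ℝ) (hd : 0 < d) (hl : 1 ≤ l) :
    d * l ^ (1/d) - 3*d - d * Real.log (l ^ (1/d) + 1)
      ≤ Real.log (∑' x : ℕ, l ^ x / (x.factorial : ℝ) ^ d) := by
  have hl0 : (0:ℝ) < l := lt_of_lt_of_le one_pos hl
  set L := l ^ (1/d) with hLdef
  have hL1 : 1 ≤ L := Real.one_le_rpow hl (by positivity)
  have hLpos : 0 < L := lt_of_lt_of_le one_pos hL1
  set n := ⌈L⌉₊ with hn
  have hn1 : 1 ≤ n := Nat.one_le_ceil_iff.2 hLpos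
  have hnpos : (0:ℝ) < (n:ℝ) := by exact_mod_cast hn1
  have hnL : L ≤ (n:ℝ) := Nat.le_ceil _
  have hnU : (n:ℝ) ≤ L + 1 := le_of_lt (Nat.ceil_lt_add_one hLpos.le)
  have hfp : (0:ℝ) < (n.factorial : ℝ) := by exact_mod_cast n.factorial_pos
  have htpos : (0:ℝ) < l ^ n / (n.factorial : ℝ) ^ d := by positivity
  have hZt : l ^ n / (n.factorial : ℝ) ^ d ≤ ∑' x : ℕ, l ^ x / (x.factorial : ℝ) ^ d :=
    Summable.le_tsum (Zsummable' l d hd hl0) n (fun b _ => Zterm_nonneg l d hl0 b)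
  have hlogle : Real.log (l ^ n / (n.factorial : ℝ) ^ d)
      ≤ Real.log (∑' x : ℕ, l ^ x / (x.factorial : ℝ) ^ d) := Real.log_le_log htpos hZt
  refine le_trans ?_ hlogle
  have hlogt : Real.log (l ^ n / (n.factorial : ℝ) ^ d)
      = (n:ℝ) * Real.log l - d * Real.log (n.factorial : ℝ) := by
    rw [Real.log_div (by positivity) (by positivity), Real.log_pow, Real.log_rpow hfp]
  rw [hlogt]
  -- log n! ≤ 1 + (n+1) log n - n
  have hfactlog : Real.log (n.factorial : ℝ) ≤ 1 + ((n:ℝ)+1) * Real.log n - n := by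
    have h1 := Real.log_le_log hfp (fact_le n hn1)
    rw [Real.log_mul (by positivity) (Real.exp_ne_zero _),
        Real.log_mul (Real.exp_ne_zero _) (by positivity),
        Real.log_exp, Real.log_exp, Real.log_pow] at h1
    push_cast at h1
    linarith
  have hlogl : Real.log l = d * Real.log L := by
    rw [hLdef, Real.log_rpow hl0]; field_simp
  have h2 : Real.log (n:ℝ) - Real.log L ≤ 1/L := by
    have ha : Real.log ((n:ℝ)/L) ≤ (n:ℝ)/L - 1 := Real.log_le_sub_one_of_pos (by positivity)
    rw [Real.log_div hnpos.ne' hLpos.ne'] at ha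
    have hb : (n:ℝ)/L ≤ (L+1)/L := by
      gcongr
    have hc : (L+1)/L = 1 + 1/L := by field_simp
    linarith
  have hlogn_le : Real.log (n:ℝ) ≤ Real.log (L + 1) := by
    apply Real.log_le_log hnpos hnU
  -- products
  have p1 : (n:ℝ) * (Real.log n - Real.log L) ≤ (n:ℝ) * (1/L) :=
    mul_le_mul_of_nonneg_left h2 hnpos.le
  have p2 : (n:ℝ) * (1/L) ≤ (L+1) * (1/L) :=
    mul_le_mul_of_nonneg_right hnU (by positivity)
  have p3 : (L+1) * (1/L) ≤ 2 := by
    have : (L+1) * (1/L) = 1 + 1/L := by field_simp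
    rw [this]
    have : 1/L ≤ 1 := by rw [div_le_one hLpos]; exact hL1
    linarith
  have q : d * ((n:ℝ) * (Real.log n - Real.log L)) ≤ d * 2 :=
    mul_le_mul_of_nonneg_left (p1.trans (p2.trans p3)) hd.le
  have r : d * Real.log (n:ℝ) ≤ d * Real.log (L+1) :=
    mul_le_mul_of_nonneg_left hlogn_le hd.le
  have sLn : d * L ≤ d * (n:ℝ) := mul_le_mul_of_nonneg_left hnL hd.le
  have hfl : d * Real.log (n.factorial : ℝ) ≤ d * (1 + ((n:ℝ)+1) * Real.log n - n) :=
    mul_le_mul_of_nonneg_left hfactlog hd.le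
  have hsub : (n:ℝ) * Real.log l = d * ((n:ℝ) * Real.log L) := by rw [hlogl]; ring
  rw [hsub]
  nlinarith [q, r, sLn, hfl]

lemma loglin (a k : ℝ) (ha : 0 < a) :
    Tendsto (fun V : ℝ => Real.log (a*V + k) / V) atTop (nhds 0) := by
  have h1 : Tendsto (fun V : ℝ => a*V + k) atTop atTop := by
    apply tendsto_atTop_add_const_right
    exact (tendsto_const_mul_atTop_of_pos ha).2 tendsto_id
  have h2 : Tendsto (fun V : ℝ => Real.log (a*V+k) / (a*V+k)) atTop (nhds 0) :=
    (Real.isLittleO_log_id_atTop.tendsto_div_nhds_zero).comp h1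
  have h3 : Tendsto (fun V : ℝ => (a*V+k)/V) atTop (nhds a) := by
    have : Tendsto (fun V : ℝ => a + k/V) atTop (nhds (a + 0)) :=
      tendsto_const_nhds.add (tendsto_const_nhds.div_atTop tendsto_id)
    rw [add_zero] at this
    apply this.congr'
    filter_upwards [eventually_gt_atTop 0] with V hV
    field_simp
  have h4 := h2.mul h3
  rw [zero_mul] at h4
  apply h4.congr'
  filter_upwards [h1.eventually_gt_atTop 0, eventually_gt_atTop (0:ℝ)] with V hV1 hV2
  field_simp

lemma Zlim (d b : ℝ) (hd : 0 < d) (hb : 0 < b) :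
    Tendsto (fun V : ℝ => (1/V) * Real.log (∑' x : ℕ, (V^d*b) ^ x / (x.factorial : ℝ) ^ d))
      atTop (nhds (d * b ^ (1/d))) := by
  have hbd : (0:ℝ) < b^(1/d) := Real.rpow_pos_of_pos hb _
  -- bounding functions
  set lo := fun V : ℝ => d * b^(1/d) - (3*d + d * Real.log (b^(1/d)*V + 1))/V with hlo
  set hi := fun V : ℝ => d * b^(1/d) + Real.log ((2*b)^(1/d)*V + 3)/V with hhi
  have hlolim : Tendsto lo atTop (nhds (d * b^(1/d))) := by
    have h1 : Tendsto (fun V : ℝ => (3*d + d * Real.log (b^(1/d)*V + 1))/V) atTop (nhds 0) := by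
      have h2 : Tendsto (fun V : ℝ => (3*d)/V + d * (Real.log (b^(1/d)*V + 1)/V)) atTop
          (nhds (0 + d * 0)) :=
        (tendsto_const_nhds.div_atTop tendsto_id).add
          ((loglin (b^(1/d)) 1 hbd).const_mul d)
      rw [mul_zero, add_zero] at h2
      apply h2.congr'
      filter_upwards [eventually_gt_atTop (0:ℝ)] with V hV
      field_simp
    have := tendsto_const_nhds (x := d * b^(1/d)) (f := atTop (α := ℝ)) |>.sub h1
    rw [sub_zero] at this
    exact this
  have hhilim : Tendsto hi atTop (nhds (d * b^(1/d))) := by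
    have h2b : (0:ℝ) < (2*b)^(1/d) := Real.rpow_pos_of_pos (by linarith) _
    have := tendsto_const_nhds (x := d * b^(1/d)) (f := atTop (α := ℝ)) |>.add
      (loglin ((2*b)^(1/d)) 3 h2b)
    rw [add_zero] at this
    exact this
  -- eventual bounds
  have hev : ∀ᶠ V : ℝ in atTop, (1 ≤ V^d*b ∧ 0 < V) := by
    have hrp : Tendsto (fun V : ℝ => V^d*b) atTop atTop :=
      (tendsto_rpow_atTop hd).atTop_mul_const hb
    filter_upwards [hrp.eventually_ge_atTop 1, eventually_gt_atTop 0] with V h1 h2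
    exact ⟨h1, h2⟩
  have keyeq : ∀ V : ℝ, 0 < V → (V^d*b)^(1/d) = b^(1/d)*V := by
    intro V hV
    rw [Real.mul_rpow (by positivity) hb.le, one_div,
      Real.rpow_rpow_inv hV.le hd.ne']
    ring
  apply tendsto_of_tendsto_of_tendsto_of_le_of_le' hlolim hhilim
  · filter_upwards [hev] with V hV12
    obtain ⟨h1, hV⟩ := hV12
    have hZlow := Zlower d (V^d*b) hd h1
    rw [keyeq V hV] at hZlow
    have h3 : (d * (b^(1/d)*V) - 3*d - d * Real.log (b^(1/d)*V + 1)) / V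
        ≤ Real.log (∑' x : ℕ, (V^d*b) ^ x / (x.factorial : ℝ) ^ d) / V := by gcongr
    have h4 : (d * (b^(1/d)*V) - 3*d - d * Real.log (b^(1/d)*V + 1)) / V
        = d * b^(1/d) - (3*d + d * Real.log (b^(1/d)*V + 1))/V := by
      field_simp
      ring
    show d * b^(1/d) - (3*d + d * Real.log (b^(1/d)*V + 1))/V
        ≤ 1/V * Real.log (∑' x : ℕ, (V^d*b) ^ x / (x.factorial : ℝ) ^ d)
    have h5 : 1/V * Real.log (∑' x : ℕ, (V^d*b) ^ x / (x.factorial : ℝ) ^ d)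
        = Real.log (∑' x : ℕ, (V^d*b) ^ x / (x.factorial : ℝ) ^ d) / V := by ring
    rw [h5]
    linarith [h3, h4]
  · filter_upwards [hev] with V hV12
    obtain ⟨h1, hV⟩ := hV12
    have hl0 : (0:ℝ) < V^d*b := lt_of_lt_of_le one_pos h1
    have hZpos : (0:ℝ) < ∑' x : ℕ, (V^d*b) ^ x / (x.factorial : ℝ) ^ d :=
      lt_of_lt_of_le one_pos (Zge_one _ d hd hl0)
    have hZup := Zupper d (V^d*b) hd h1
    have hlog := Real.log_le_log hZpos hZup
    rw [Real.log_mul (by positivity) (Real.exp_ne_zero _), Real.log_exp, keyeq V hV] at hlog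
    have heq2 : (2*(V^d*b))^(1/d) = (2*b)^(1/d)*V := by
      rw [show 2*(V^d*b) = V^d*(2*b) by ring,
        Real.mul_rpow (by positivity) (by positivity)]
      rw [one_div, Real.rpow_rpow_inv hV.le hd.ne']
      ring
    rw [heq2] at hlog
    have h3 : Real.log (∑' x : ℕ, (V^d*b) ^ x / (x.factorial : ℝ) ^ d) / V
        ≤ (Real.log ((2*b)^(1/d)*V + 3) + d * (b^(1/d)*V)) / V := by gcongr
    have h4 : (Real.log ((2*b)^(1/d)*V + 3) + d * (b^(1/d)*V)) / V
        = d * b^(1/d) + Real.log ((2*b)^(1/d)*V + 3)/V := by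
      field_simp
      ring
    show 1/V * Real.log (∑' x : ℕ, (V^d*b) ^ x / (x.factorial : ℝ) ^ d)
        ≤ d * b^(1/d) + Real.log ((2*b)^(1/d)*V + 3)/V
    have h5 : 1/V * Real.log (∑' x : ℕ, (V^d*b) ^ x / (x.factorial : ℝ) ^ d)
        = Real.log (∑' x : ℕ, (V^d*b) ^ x / (x.factorial : ℝ) ^ d) / V := by ring
    rw [h5]
    linarith [h3, h4]


lemma dominate (f g : ℕ → ℝ) (hf : ∀ x, 0 < f x) (hg : ∀ x, 0 < g x) (J : ℕ)
    (h : ∀ x, J ≤ x → f (x+1) * g x ≤ f x * g (x+1)) :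
    ∃ C, 1 ≤ C ∧ ∀ x, f x ≤ C * g x := by
  have hne : (Finset.range (J+1)).Nonempty := ⟨0, by simp⟩
  set C0 := (Finset.range (J+1)).sup' hne (fun x => f x / g x) with hC0
  set C := max C0 1 with hC
  refine ⟨C, le_max_right _ _, ?_⟩
  have hCle : ∀ x, x ≤ J → f x ≤ C * g x := by
    intro x hx
    have h1 : f x / g x ≤ C0 := Finset.le_sup' (fun y => f y / g y) (Finset.mem_range.2 (by omega))
    have h2 : f x / g x ≤ C := le_trans h1 (le_max_left _ _)
    rw [div_le_iff₀ (hg x)] at h2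
    linarith [h2]
  intro x
  induction x with
  | zero => exact hCle 0 (Nat.zero_le J)
  | succ k ih =>
    rcases Nat.lt_or_ge k J with hk | hk
    · exact hCle (k+1) hk
    · have h1 := h k hk
      have h2 : f k * g (k+1) ≤ (C * g k) * g (k+1) :=
        mul_le_mul_of_nonneg_right ih (hg (k+1)).le
      have h3 : f (k+1) * g k ≤ (C * g (k+1)) * g k := by nlinarith [h1, h2]
      exact le_of_mul_le_mul_right h3 (hg k)

lemma pi_fact : ∀ (m : ℕ) (f : Fin m → ℕ → ℝ), (∀ i x, 0 ≤ f i x) → (∀ i, Summable (f i)) →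
    Summable (fun x : Fin m → ℕ => ∏ i, f i (x i)) ∧
    (∑' x : Fin m → ℕ, ∏ i, f i (x i)) = ∏ i, ∑' n, f i n := by
  intro m
  induction m with
  | zero =>
    intro f h0 hs
    constructor
    · exact Summable.of_finite
    · simp
  | succ k ih =>
    intro f h0 hs
    obtain ⟨ihs0, ihe0⟩ := ih (fun i => f i.succ) (fun i x => h0 i.succ x) (fun i => hs i.succ)
    have ihs : Summable (fun y : Fin k → ℕ => ∏ i : Fin k, f i.succ (y i)) := ihs0
    have ihe : (∑' y : Fin k → ℕ, ∏ i : Fin k, f i.succ (y i)) = ∏ i : Fin k, ∑' n, f i.succ n := ihe0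
    have hgs : Summable (fun p : ℕ × (Fin k → ℕ) => f 0 p.1 * ∏ i : Fin k, f i.succ (p.2 i)) :=
      Summable.mul_of_nonneg (f := f 0) (g := fun y : Fin k → ℕ => ∏ i : Fin k, f i.succ (y i))
        (hs 0) ihs (fun x => h0 0 x) (fun y => Finset.prod_nonneg (fun i _ => h0 i.succ (y i)))
    set g : ℕ × (Fin k → ℕ) → ℝ := fun p => f 0 p.1 * ∏ i : Fin k, f i.succ (p.2 i) with hg
    have hcomp : ∀ x : Fin (k+1) → ℕ, (∏ i, f i (x i)) = g ((Fin.consEquiv (fun _ : Fin (k+1) => ℕ)).symm x) := by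
      intro x
      rw [Fin.prod_univ_succ]
      rfl
    constructor
    · apply Summable.congr ((Fin.consEquiv (fun _ : Fin (k+1) => ℕ)).symm.summable_iff.2 hgs)
      intro x
      exact (hcomp x).symm
    · have e1 : (∑' x : Fin (k+1) → ℕ, ∏ i, f i (x i)) = ∑' p : ℕ × (Fin k → ℕ), g p := by
        rw [← (Fin.consEquiv (fun _ : Fin (k+1) => ℕ)).symm.tsum_eq g]
        exact tsum_congr hcomp
      rw [e1, ← Summable.tsum_mul_tsum (hs 0) ihs hgs, ihe, Fin.prod_univ_succ]

lemma theta_bounds (θ : ℤ → ℝ) (A d : ℝ) (hA : 0 < A) (hd : 0 < d)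
    (hθpos : ∀ j : ℤ, 1 ≤ j → 0 < θ j)
    (hθlim : Tendsto (fun x : ℤ => θ x / (x:ℝ) ^ d) atTop (nhds A))
    (ε : ℝ) (hε : 0 < ε) :
    ∃ C, 1 ≤ C ∧ ∀ x : ℕ,
      (Real.exp (-ε))^x * A^x * ((x.factorial:ℝ))^d ≤ C * ∏ j ∈ Finset.range x, θ (j+1) ∧
      (∏ j ∈ Finset.range x, θ (j+1)) ≤ C * ((Real.exp ε)^x * A^x * ((x.factorial:ℝ))^d) := by
  have hexp1 : 1 < Real.exp ε := by nlinarith [Real.add_one_le_exp ε]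
  have hexp2 : Real.exp (-ε) < 1 := by
    rw [Real.exp_neg]
    exact inv_lt_one_of_one_lt₀ hexp1
  have hI : Set.Ioo (Real.exp (-ε) * A) (Real.exp ε * A) ∈ nhds A := by
    apply Ioo_mem_nhds
    · nlinarith
    · nlinarith
  obtain ⟨J0, hJ0⟩ := Filter.eventually_atTop.1 (hθlim.eventually hI)
  set J : ℕ := max J0.toNat 1 with hJ
  have key : ∀ x : ℕ, J ≤ x →
      Real.exp (-ε) * A * ((x:ℝ))^d ≤ θ (x:ℤ) ∧ θ (x:ℤ) ≤ Real.exp ε * A * ((x:ℝ))^d := by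
    intro x hx
    have hx1 : 1 ≤ x := le_trans (le_max_right _ _) hx
    have hxZ : J0 ≤ (x:ℤ) := by
      calc J0 ≤ (J0.toNat : ℤ) := Int.self_le_toNat J0
      _ ≤ (J : ℤ) := by exact_mod_cast le_max_left _ _
      _ ≤ (x:ℤ) := by exact_mod_cast hx
    have hmem := hJ0 (x:ℤ) hxZ
    have hxR : (0:ℝ) < (x:ℝ) := by exact_mod_cast hx1
    have hxd : (0:ℝ) < ((x:ℝ))^d := Real.rpow_pos_of_pos hxR d
    have hcast : (((x:ℤ)):ℝ) = (x:ℝ) := by push_cast; rfl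
    rw [hcast] at hmem
    obtain ⟨h1, h2⟩ := hmem
    rw [lt_div_iff₀ hxd] at h1
    rw [div_lt_iff₀ hxd] at h2
    exact ⟨h1.le, h2.le⟩
  set P : ℕ → ℝ := fun x => ∏ j ∈ Finset.range x, θ (j+1) with hPdef
  have hP : ∀ x, 0 < P x := by
    intro x
    apply Finset.prod_pos
    intro j _
    apply hθpos
    omega
  have hfac : ∀ x : ℕ, (0:ℝ) < (x.factorial : ℝ) := fun x => by exact_mod_cast x.factorial_pos
  have hfacsucc : ∀ x : ℕ, (((x+1).factorial : ℝ))^d = ((x:ℝ)+1)^d * ((x.factorial:ℝ))^d := by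
    intro x
    have h : (((x+1).factorial : ℕ) : ℝ) = ((x:ℝ)+1) * (x.factorial : ℝ) := by
      rw [Nat.factorial_succ]; push_cast; ring
    rw [h, Real.mul_rpow (by positivity) (by positivity)]
  have hPsucc : ∀ x : ℕ, P (x+1) = P x * θ ((x:ℤ)+1) := by
    intro x
    rw [hPdef]
    simp [Finset.prod_range_succ]
  have hθcast : ∀ x : ℕ, θ (((x+1:ℕ)):ℤ) = θ ((x:ℤ)+1) := by
    intro x
    congr 1
  -- upper bound on P
  obtain ⟨C1, hC1, hC1b⟩ := dominate P (fun x => (Real.exp ε)^x * A^x * ((x.factorial:ℝ))^d)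
    hP (fun x => by positivity) J (by
      intro x hx
      have hk := (key (x+1) (by omega)).2
      rw [hθcast x] at hk
      beta_reduce
      rw [hPsucc x, hfacsucc x]
      have hpos : (0:ℝ) ≤ P x * ((Real.exp ε)^x * A^x * ((x.factorial:ℝ))^d) := by
        have := hP x
        positivity
      have hcast2 : (((x+1:ℕ)):ℝ) = (x:ℝ)+1 := by norm_cast
      rw [hcast2] at hk
      calc P x * θ ((x:ℤ)+1) * ((Real.exp ε)^x * A^x * ((x.factorial:ℝ))^d)
          = (P x * ((Real.exp ε)^x * A^x * ((x.factorial:ℝ))^d)) * θ ((x:ℤ)+1) := by ring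
        _ ≤ (P x * ((Real.exp ε)^x * A^x * ((x.factorial:ℝ))^d)) * (Real.exp ε * A * ((x:ℝ)+1)^d) :=
            mul_le_mul_of_nonneg_left hk hpos
        _ = P x * ((Real.exp ε)^(x+1) * A^(x+1) * (((x:ℝ)+1)^d * ((x.factorial:ℝ))^d)) := by ring
      )
  -- lower bound on P
  obtain ⟨C2, hC2, hC2b⟩ := dominate (fun x => (Real.exp (-ε))^x * A^x * ((x.factorial:ℝ))^d) P
    (fun x => by positivity) hP J (by
      intro x hx
      have hk := (key (x+1) (by omega)).1
      rw [hθcast x] at hk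
      beta_reduce
      rw [hPsucc x, hfacsucc x]
      have hpos : (0:ℝ) ≤ P x * ((Real.exp (-ε))^x * A^x * ((x.factorial:ℝ))^d) := by
        have := hP x
        positivity
      have hcast2 : (((x+1:ℕ)):ℝ) = (x:ℝ)+1 := by norm_cast
      rw [hcast2] at hk
      calc (Real.exp (-ε))^(x+1) * A^(x+1) * (((x:ℝ)+1)^d * ((x.factorial:ℝ))^d) * P x
          = (P x * ((Real.exp (-ε))^x * A^x * ((x.factorial:ℝ))^d)) * (Real.exp (-ε) * A * ((x:ℝ)+1)^d) := by ring
        _ ≤ (P x * ((Real.exp (-ε))^x * A^x * ((x.factorial:ℝ))^d)) * θ ((x:ℤ)+1) :=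
            mul_le_mul_of_nonneg_left hk hpos
        _ = (Real.exp (-ε))^x * A^x * ((x.factorial:ℝ))^d * (P x * θ ((x:ℤ)+1)) := by ring
      )
  refine ⟨max C1 C2, le_trans hC1 (le_max_left _ _), fun x => ⟨?_, ?_⟩⟩
  · calc (Real.exp (-ε))^x * A^x * ((x.factorial:ℝ))^d ≤ C2 * P x := hC2b x
    _ ≤ max C1 C2 * P x := mul_le_mul_of_nonneg_right (le_max_right _ _) (hP x).le
  · calc P x ≤ C1 * ((Real.exp ε)^x * A^x * ((x.factorial:ℝ))^d) := hC1b x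
    _ ≤ max C1 C2 * ((Real.exp ε)^x * A^x * ((x.factorial:ℝ))^d) :=
        mul_le_mul_of_nonneg_right (le_max_left _ _) (by positivity)


lemma master (m : ℕ) (d A c : Fin m → ℝ) (θ : Fin m → ℤ → ℝ)
    (hd : ∀ i, 0 < d i) (hA : ∀ i, 0 < A i) (hc : ∀ i, 0 < c i)
    (hθpos : ∀ i, ∀ j : ℤ, 1 ≤ j → 0 < θ i j)
    (hθlim : ∀ i, Filter.Tendsto (fun x : ℤ => θ i x / (x : ℝ) ^ (d i))
      Filter.atTop (nhds (A i)))
    (ε : ℝ) (hε : 0 < ε) :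
    ∃ C : ℝ, 1 ≤ C ∧ ∀ V : ℝ, 0 < V →
      Summable (fun x : Fin m → ℕ =>
        ∏ i, (V ^ (d i) * c i) ^ (x i) / ∏ j ∈ Finset.range (x i), θ i (j + 1)) ∧
      (∑' x : Fin m → ℕ,
          ∏ i, (V ^ (d i) * c i) ^ (x i) / ∏ j ∈ Finset.range (x i), θ i (j + 1))
        ≤ C * ∏ i, (∑' x : ℕ, (V ^ (d i) * (c i * Real.exp ε / A i)) ^ x / (x.factorial:ℝ) ^ (d i)) ∧
      (∏ i, (∑' x : ℕ, (V ^ (d i) * (c i * Real.exp (-ε) / A i)) ^ x / (x.factorial:ℝ) ^ (d i)))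
        ≤ C * (∑' x : Fin m → ℕ,
          ∏ i, (V ^ (d i) * c i) ^ (x i) / ∏ j ∈ Finset.range (x i), θ i (j + 1)) := by
  have hth : ∀ i, ∃ C, 1 ≤ C ∧ ∀ x : ℕ,
      (Real.exp (-ε))^x * (A i)^x * ((x.factorial:ℝ))^(d i) ≤ C * ∏ j ∈ Finset.range x, θ i (j+1) ∧
      (∏ j ∈ Finset.range x, θ i (j+1)) ≤ C * ((Real.exp ε)^x * (A i)^x * ((x.factorial:ℝ))^(d i)) :=
    fun i => theta_bounds (θ i) (A i) (d i) (hA i) (hd i) (hθpos i) (hθlim i) ε hε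
  choose Cf hCf1 hCf2 using hth
  refine ⟨∏ i, Cf i, ?_, ?_⟩
  · calc (1:ℝ) = ∏ _i : Fin m, (1:ℝ) := by simp
    _ ≤ ∏ i, Cf i := Finset.prod_le_prod (fun i _ => zero_le_one) (fun i _ => hCf1 i)
  intro V hV
  have hVd : ∀ i, (0:ℝ) < V ^ (d i) := fun i => Real.rpow_pos_of_pos hV _
  have hfacpos : ∀ x : ℕ, (0:ℝ) < (x.factorial : ℝ) := fun x => by exact_mod_cast x.factorial_pos
  have hfacd : ∀ i (x : ℕ), (0:ℝ) < ((x.factorial:ℝ))^(d i) := fun i x => by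
    have := hfacpos x; positivity
  have hPpos : ∀ i (x : ℕ), (0:ℝ) < ∏ j ∈ Finset.range x, θ i (j+1) := by
    intro i x
    apply Finset.prod_pos
    intro j _
    exact hθpos i _ (by omega)
  -- pointwise upper bound per coordinate
  have hup : ∀ i (x : ℕ),
      (V ^ (d i) * c i) ^ x / ∏ j ∈ Finset.range x, θ i (j + 1)
        ≤ Cf i * ((V ^ (d i) * (c i * Real.exp ε / A i)) ^ x / (x.factorial:ℝ) ^ (d i)) := by
    intro i x
    have hQlo : (0:ℝ) < (Real.exp (-ε))^x * (A i)^x * ((x.factorial:ℝ))^(d i) := by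
      have := hfacd i x; have := hA i; positivity
    have hb := (hCf2 i x).1
    have hN : (0:ℝ) ≤ (V ^ (d i) * c i) ^ x := by
      have := hVd i; have := hc i; positivity
    have key : (V ^ (d i) * c i) ^ x / ∏ j ∈ Finset.range x, θ i (j + 1)
        ≤ ((V ^ (d i) * c i) ^ x * Cf i) / ((Real.exp (-ε))^x * (A i)^x * ((x.factorial:ℝ))^(d i)) := by
      rw [div_le_div_iff₀ (hPpos i x) hQlo]
      calc (V ^ (d i) * c i) ^ x * ((Real.exp (-ε))^x * (A i)^x * ((x.factorial:ℝ))^(d i))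
          ≤ (V ^ (d i) * c i) ^ x * (Cf i * ∏ j ∈ Finset.range x, θ i (j + 1)) :=
            mul_le_mul_of_nonneg_left hb hN
        _ = (V ^ (d i) * c i) ^ x * Cf i * ∏ j ∈ Finset.range x, θ i (j + 1) := by ring
    refine key.trans (le_of_eq ?_)
    have hsplit : (V ^ (d i) * (c i * Real.exp ε / A i)) ^ x
        = (V ^ (d i) * c i) ^ x * (Real.exp ε)^x / (A i)^x := by
      rw [show V ^ (d i) * (c i * Real.exp ε / A i) = (V ^ (d i) * c i) * Real.exp ε / A i by ring,
        div_pow, mul_pow]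
    rw [hsplit, Real.exp_neg, inv_pow]
    have h1 : ((Real.exp ε)^x)⁻¹ ≠ 0 := by positivity
    have h2 : (A i)^x ≠ 0 := by have := hA i; positivity
    have h3 : ((x.factorial:ℝ))^(d i) ≠ 0 := (hfacd i x).ne'
    field_simp
  -- pointwise lower bound per coordinate
  have hlo : ∀ i (x : ℕ),
      (V ^ (d i) * (c i * Real.exp (-ε) / A i)) ^ x / (x.factorial:ℝ) ^ (d i)
        ≤ Cf i * ((V ^ (d i) * c i) ^ x / ∏ j ∈ Finset.range x, θ i (j + 1)) := by
    intro i x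
    have hQhi : (0:ℝ) < (Real.exp ε)^x * (A i)^x * ((x.factorial:ℝ))^(d i) := by
      have := hfacd i x; have := hA i; positivity
    have hb := (hCf2 i x).2
    have hN : (0:ℝ) ≤ (V ^ (d i) * c i) ^ x := by
      have := hVd i; have := hc i; positivity
    have key : (V ^ (d i) * c i) ^ x / ((Real.exp ε)^x * (A i)^x * ((x.factorial:ℝ))^(d i))
        ≤ (Cf i * (V ^ (d i) * c i) ^ x) / ∏ j ∈ Finset.range x, θ i (j + 1) := by
      rw [div_le_div_iff₀ hQhi (hPpos i x)]
      calc (V ^ (d i) * c i) ^ x * ∏ j ∈ Finset.range x, θ i (j + 1)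
          ≤ (V ^ (d i) * c i) ^ x * (Cf i * ((Real.exp ε)^x * (A i)^x * ((x.factorial:ℝ))^(d i))) :=
            mul_le_mul_of_nonneg_left hb hN
        _ = Cf i * (V ^ (d i) * c i) ^ x * ((Real.exp ε)^x * (A i)^x * ((x.factorial:ℝ))^(d i)) := by ring
    refine le_trans (le_of_eq ?_) (key.trans (le_of_eq ?_))
    · have hsplit : (V ^ (d i) * (c i * Real.exp (-ε) / A i)) ^ x
          = (V ^ (d i) * c i) ^ x * ((Real.exp ε)^x)⁻¹ / (A i)^x := by
        rw [show V ^ (d i) * (c i * Real.exp (-ε) / A i) = (V ^ (d i) * c i) * Real.exp (-ε) / A i by ring,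
          div_pow, mul_pow, Real.exp_neg, inv_pow]
      rw [hsplit]
      have h1 : ((Real.exp ε)^x) ≠ 0 := by positivity
      have h2 : (A i)^x ≠ 0 := by have := hA i; positivity
      have h3 : ((x.factorial:ℝ))^(d i) ≠ 0 := (hfacd i x).ne'
      field_simp
    · rw [mul_div_assoc]
  -- model summability
  have hmodsum : ∀ (s : ℝ), 0 < s → ∀ i, Summable (fun x : ℕ =>
      (V ^ (d i) * (c i * s / A i)) ^ x / (x.factorial:ℝ) ^ (d i)) := by
    intro s hs i
    apply Zsummable' _ _ (hd i)
    have := hVd i; have := hc i; have := hA i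
    positivity
  have hmodnn : ∀ (s : ℝ), 0 < s → ∀ i (x : ℕ),
      (0:ℝ) ≤ (V ^ (d i) * (c i * s / A i)) ^ x / (x.factorial:ℝ) ^ (d i) := by
    intro s hs i x
    have := hVd i; have := hc i; have := hA i; have := hfacd i x
    positivity
  obtain ⟨hpisum_up, hpieq_up⟩ := pi_fact m
    (fun i x => (V ^ (d i) * (c i * Real.exp ε / A i)) ^ x / (x.factorial:ℝ) ^ (d i))
    (hmodnn _ (Real.exp_pos ε)) (hmodsum _ (Real.exp_pos ε))
  obtain ⟨hpisum_lo, hpieq_lo⟩ := pi_fact m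
    (fun i x => (V ^ (d i) * (c i * Real.exp (-ε) / A i)) ^ x / (x.factorial:ℝ) ^ (d i))
    (hmodnn _ (Real.exp_pos (-ε))) (hmodsum _ (Real.exp_pos (-ε)))
  -- θ-term facts
  have hθtermnn : ∀ (x : Fin m → ℕ),
      (0:ℝ) ≤ ∏ i, (V ^ (d i) * c i) ^ (x i) / ∏ j ∈ Finset.range (x i), θ i (j + 1) := by
    intro x
    apply Finset.prod_nonneg
    intro i _
    have := hVd i; have := hc i; have := hPpos i (x i)
    positivity
  have hptwise_up : ∀ (x : Fin m → ℕ),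
      (∏ i, (V ^ (d i) * c i) ^ (x i) / ∏ j ∈ Finset.range (x i), θ i (j + 1))
        ≤ (∏ i, Cf i) * ∏ i, (V ^ (d i) * (c i * Real.exp ε / A i)) ^ (x i) / ((x i).factorial:ℝ) ^ (d i) := by
    intro x
    rw [← Finset.prod_mul_distrib]
    apply Finset.prod_le_prod
    · intro i _
      have := hVd i; have := hc i; have := hPpos i (x i)
      positivity
    · intro i _
      exact hup i (x i)
  have hsummable_θ : Summable (fun x : Fin m → ℕ =>
      ∏ i, (V ^ (d i) * c i) ^ (x i) / ∏ j ∈ Finset.range (x i), θ i (j + 1)) := by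
    apply Summable.of_nonneg_of_le hθtermnn hptwise_up
    exact hpisum_up.mul_left _
  refine ⟨hsummable_θ, ?_, ?_⟩
  · calc (∑' x : Fin m → ℕ,
          ∏ i, (V ^ (d i) * c i) ^ (x i) / ∏ j ∈ Finset.range (x i), θ i (j + 1))
        ≤ ∑' x : Fin m → ℕ, (∏ i, Cf i) * ∏ i, (V ^ (d i) * (c i * Real.exp ε / A i)) ^ (x i) / ((x i).factorial:ℝ) ^ (d i) :=
          Summable.tsum_le_tsum hptwise_up hsummable_θ (hpisum_up.mul_left _)
      _ = (∏ i, Cf i) * ∑' x : Fin m → ℕ, ∏ i, (V ^ (d i) * (c i * Real.exp ε / A i)) ^ (x i) / ((x i).factorial:ℝ) ^ (d i) :=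
          tsum_mul_left
      _ = (∏ i, Cf i) * ∏ i, (∑' x : ℕ, (V ^ (d i) * (c i * Real.exp ε / A i)) ^ x / (x.factorial:ℝ) ^ (d i)) := by
          rw [hpieq_up]
  · have hptwise_lo : ∀ (x : Fin m → ℕ),
        (∏ i, (V ^ (d i) * (c i * Real.exp (-ε) / A i)) ^ (x i) / ((x i).factorial:ℝ) ^ (d i))
          ≤ (∏ i, Cf i) * ∏ i, (V ^ (d i) * c i) ^ (x i) / ∏ j ∈ Finset.range (x i), θ i (j + 1) := by
      intro x
      rw [← Finset.prod_mul_distrib]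
      apply Finset.prod_le_prod
      · intro i _
        exact hmodnn _ (Real.exp_pos (-ε)) i (x i)
      · intro i _
        exact hlo i (x i)
    calc (∏ i, (∑' x : ℕ, (V ^ (d i) * (c i * Real.exp (-ε) / A i)) ^ x / (x.factorial:ℝ) ^ (d i)))
        = ∑' x : Fin m → ℕ, ∏ i, (V ^ (d i) * (c i * Real.exp (-ε) / A i)) ^ (x i) / ((x i).factorial:ℝ) ^ (d i) :=
          hpieq_lo.symm
      _ ≤ ∑' x : Fin m → ℕ, (∏ i, Cf i) * ∏ i, (V ^ (d i) * c i) ^ (x i) / ∏ j ∈ Finset.range (x i), θ i (j + 1) :=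
          Summable.tsum_le_tsum hptwise_lo hpisum_lo (hsummable_θ.mul_left _)
      _ = (∏ i, Cf i) * (∑' x : Fin m → ℕ,
          ∏ i, (V ^ (d i) * c i) ^ (x i) / ∏ j ∈ Finset.range (x i), θ i (j + 1)) :=
          tsum_mul_left


/-- Under the assumption `θ_i(x)/x^{d_i} → A_i`, for all sufficiently
large `V` both partition-function-like sums are finite, and the difference of their
scaled logarithms tends to `0` as `V → ∞`. -/
theorem stmt16 (m : ℕ) (d A c : Fin m → ℝ) (θ : Fin m → ℤ → ℝ)
    (hd : ∀ i, 0 < d i) (hA : ∀ i, 0 < A i) (hc : ∀ i, 0 < c i)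
    (hθnn : ∀ i x, 0 ≤ θ i x)
    (hθ0 : ∀ i, ∀ x : ℤ, x ≤ 0 → θ i x = 0)
    (hθpos : ∀ i, ∀ j : ℤ, 1 ≤ j → 0 < θ i j)
    (hθlim : ∀ i, Filter.Tendsto (fun x : ℤ => θ i x / (x : ℝ) ^ (d i))
      Filter.atTop (nhds (A i))) :
    (∀ᶠ V : ℝ in Filter.atTop,
      Summable (fun x : Fin m → ℕ =>
        ∏ i, (V ^ (d i) * c i) ^ (x i) / ∏ j ∈ Finset.range (x i), θ i (j + 1)) ∧
      Summable (fun x : Fin m → ℕ =>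
        ∏ i, (V ^ (d i) * c i * (A i)⁻¹) ^ (x i) / ((x i).factorial : ℝ) ^ (d i))) ∧
    Filter.Tendsto
      (fun V : ℝ =>
        (1 / V) * Real.log (∑' x : Fin m → ℕ,
          ∏ i, (V ^ (d i) * c i) ^ (x i) / ∏ j ∈ Finset.range (x i), θ i (j + 1)) -
        (1 / V) * Real.log (∑' x : Fin m → ℕ,
          ∏ i, (V ^ (d i) * c i * (A i)⁻¹) ^ (x i) / ((x i).factorial : ℝ) ^ (d i)))
      Filter.atTop (nhds 0) := by
  have hfacpos : ∀ x : ℕ, (0:ℝ) < (x.factorial : ℝ) := fun x => by exact_mod_cast x.factorial_pos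
  constructor
  · -- eventual summability
    obtain ⟨C, hC, hmain⟩ := master m d A c θ hd hA hc hθpos hθlim 1 one_pos
    filter_upwards [eventually_gt_atTop (0:ℝ)] with V hV
    refine ⟨(hmain V hV).1, ?_⟩
    have h := (pi_fact m (fun i x => (V ^ (d i) * c i * (A i)⁻¹)^x / ((x.factorial:ℝ))^(d i))
      (fun i x => by
        have h1 := Real.rpow_pos_of_pos hV (d i)
        have h2 := hc i; have h3 := hA i; have h4 := hfacpos x
        positivity)
      (fun i => Zsummable' _ _ (hd i) (by
        have h1 := Real.rpow_pos_of_pos hV (d i)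
        have h2 := hc i; have h3 := hA i
        positivity))).1
    exact h
  · -- the limit
    rw [NormedAddCommGroup.tendsto_nhds_zero]
    intro δ hδ
    set φ : ℝ → ℝ := fun t =>
      ∑ i, (d i * (c i * Real.exp t / A i) ^ (1/(d i)) - d i * (c i * 1 / A i) ^ (1/(d i))) with hφdef
    have hφcont : Continuous φ := by
      apply continuous_finset_sum
      intro i _
      apply Continuous.sub _ continuous_const
      apply Continuous.mul continuous_const
      apply Continuous.rpow_const
      · fun_prop
      · intro t
        left
        have h1 := hc i; have h2 := hA i; have h3 := Real.exp_pos t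
        positivity
    have hφ0 : φ 0 = 0 := by
      simp [hφdef, Real.exp_zero]
    have hφtend : Tendsto φ (nhds 0) (nhds 0) := by
      have := hφcont.continuousAt (x := (0:ℝ))
      rwa [ContinuousAt, hφ0] at this
    have h1 : ∀ᶠ t in nhds (0:ℝ), |φ t| < δ/2 := by
      have := Metric.tendsto_nhds.1 hφtend (δ/2) (by linarith)
      simpa [Real.dist_eq] using this
    have h2 : ∀ᶠ t in nhds (0:ℝ), |φ (-t)| < δ/2 := by
      have hneg : Tendsto (fun t : ℝ => -t) (nhds 0) (nhds 0) := by
        simpa using (continuous_neg.tendsto (0:ℝ))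
      exact hneg.eventually h1
    obtain ⟨ε, ⟨hb1, hb2⟩, hεpos⟩ :=
      (((h1.and h2).filter_mono nhdsWithin_le_nhds).and
        (eventually_mem_nhdsWithin (s := Set.Ioi (0:ℝ)) (a := 0))).exists
    rw [Set.mem_Ioi] at hεpos
    obtain ⟨C, hC, hmain⟩ := master m d A c θ hd hA hc hθpos hθlim ε hεpos
    have hCpos : (0:ℝ) < C := lt_of_lt_of_le one_pos hC
    -- per-coordinate limits
    have hZl : ∀ (s : ℝ), 0 < s → ∀ i : Fin m,
        Tendsto (fun V : ℝ => (1/V) * Real.log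
          (∑' x : ℕ, (V^(d i) * (c i * s / A i)) ^ x / (x.factorial:ℝ)^(d i)))
          atTop (nhds (d i * (c i * s / A i) ^ (1/(d i)))) := by
      intro s hs i
      apply Zlim (d i) (c i * s / A i) (hd i)
      have := hc i; have := hA i
      positivity
    -- upper comparison function
    set Uf : ℝ → ℝ := fun V => Real.log C / V +
      ∑ i, ((1/V) * Real.log (∑' x : ℕ, (V^(d i) * (c i * Real.exp ε / A i)) ^ x / (x.factorial:ℝ)^(d i))
          - (1/V) * Real.log (∑' x : ℕ, (V^(d i) * (c i * 1 / A i)) ^ x / (x.factorial:ℝ)^(d i))) with hUfdef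
    set Lf : ℝ → ℝ := fun V => -(Real.log C / V) +
      ∑ i, ((1/V) * Real.log (∑' x : ℕ, (V^(d i) * (c i * Real.exp (-ε) / A i)) ^ x / (x.factorial:ℝ)^(d i))
          - (1/V) * Real.log (∑' x : ℕ, (V^(d i) * (c i * 1 / A i)) ^ x / (x.factorial:ℝ)^(d i))) with hLfdef
    have hdiv0 : Tendsto (fun V : ℝ => Real.log C / V) atTop (nhds 0) :=
      tendsto_const_nhds.div_atTop tendsto_id
    have hUtend : Tendsto Uf atTop (nhds (φ ε)) := by
      have hsum : Tendsto (fun V : ℝ =>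
          ∑ i, ((1/V) * Real.log (∑' x : ℕ, (V^(d i) * (c i * Real.exp ε / A i)) ^ x / (x.factorial:ℝ)^(d i))
          - (1/V) * Real.log (∑' x : ℕ, (V^(d i) * (c i * 1 / A i)) ^ x / (x.factorial:ℝ)^(d i))))
          atTop (nhds (φ ε)) := by
        rw [hφdef]
        exact tendsto_finset_sum _ (fun i _ =>
          (hZl (Real.exp ε) (Real.exp_pos ε) i).sub (hZl 1 one_pos i))
      have := hdiv0.add hsum
      rwa [zero_add] at this
    have hLtend : Tendsto Lf atTop (nhds (φ (-ε))) := by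
      have hsum : Tendsto (fun V : ℝ =>
          ∑ i, ((1/V) * Real.log (∑' x : ℕ, (V^(d i) * (c i * Real.exp (-ε) / A i)) ^ x / (x.factorial:ℝ)^(d i))
          - (1/V) * Real.log (∑' x : ℕ, (V^(d i) * (c i * 1 / A i)) ^ x / (x.factorial:ℝ)^(d i))))
          atTop (nhds (φ (-ε))) := by
        rw [hφdef]
        exact tendsto_finset_sum _ (fun i _ =>
          (hZl (Real.exp (-ε)) (Real.exp_pos (-ε)) i).sub (hZl 1 one_pos i))
      have := (hdiv0.neg).add hsum
      rwa [neg_zero, zero_add] at this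
    have hUev : ∀ᶠ V in atTop, Uf V < δ :=
      hUtend.eventually_lt_const (lt_of_le_of_lt (le_abs_self _) (by linarith [hb1]))
    have hLev : ∀ᶠ V in atTop, -δ < Lf V := by
      apply hLtend.eventually_const_lt
      have := abs_lt.1 hb2
      linarith [this.1]
    filter_upwards [hUev, hLev, eventually_gt_atTop (0:ℝ)] with V hu hl hV
    have hVd : ∀ i : Fin m, (0:ℝ) < V ^ (d i) := fun i => Real.rpow_pos_of_pos hV _
    obtain ⟨hsumθ, hupZ, hloZ⟩ := hmain V hV
    -- positivity of Zθ
    have hθtermnn : ∀ (x : Fin m → ℕ),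
        (0:ℝ) ≤ ∏ i, (V ^ (d i) * c i) ^ (x i) / ∏ j ∈ Finset.range (x i), θ i (j + 1) := by
      intro x
      apply Finset.prod_nonneg
      intro i _
      have h1 := hVd i; have h2 := hc i
      have h3 : (0:ℝ) < ∏ j ∈ Finset.range (x i), θ i (j + 1) :=
        Finset.prod_pos (fun j _ => hθpos i _ (by omega))
      positivity
    have hZθ1 : 1 ≤ ∑' x : Fin m → ℕ,
        ∏ i, (V ^ (d i) * c i) ^ (x i) / ∏ j ∈ Finset.range (x i), θ i (j + 1) := by
      have h := Summable.le_tsum hsumθ 0 (fun b _ => hθtermnn b)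
      simpa using h
    have hZθpos : (0:ℝ) < ∑' x : Fin m → ℕ,
        ∏ i, (V ^ (d i) * c i) ^ (x i) / ∏ j ∈ Finset.range (x i), θ i (j + 1) :=
      lt_of_lt_of_le one_pos hZθ1
    -- per-coordinate model sums
    have hZi1 : ∀ (s : ℝ), 0 < s → ∀ i : Fin m,
        1 ≤ ∑' x : ℕ, (V^(d i) * (c i * s / A i)) ^ x / (x.factorial:ℝ)^(d i) := by
      intro s hs i
      apply Zge_one _ _ (hd i)
      have := hVd i; have := hc i; have := hA i
      positivity
    have hZipos : ∀ (s : ℝ), 0 < s → ∀ i : Fin m,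
        (0:ℝ) < ∑' x : ℕ, (V^(d i) * (c i * s / A i)) ^ x / (x.factorial:ℝ)^(d i) :=
      fun s hs i => lt_of_lt_of_le one_pos (hZi1 s hs i)
    -- model tsum equality
    have hZmodeq : (∑' x : Fin m → ℕ,
        ∏ i, (V ^ (d i) * c i * (A i)⁻¹) ^ (x i) / ((x i).factorial : ℝ) ^ (d i))
        = ∏ i, ∑' x : ℕ, (V^(d i) * (c i * 1 / A i)) ^ x / (x.factorial:ℝ)^(d i) := by
      have h := (pi_fact m (fun i x => (V ^ (d i) * c i * (A i)⁻¹)^x / ((x.factorial:ℝ))^(d i))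
        (fun i x => by
          have h1 := hVd i; have h2 := hc i; have h3 := hA i; have h4 := hfacpos x
          positivity)
        (fun i => Zsummable' _ _ (hd i) (by
          have h1 := hVd i; have h2 := hc i; have h3 := hA i
          positivity))).2
      rw [h]
      apply Finset.prod_congr rfl
      intro i _
      apply tsum_congr
      intro x
      rw [show V ^ (d i) * c i * (A i)⁻¹ = V ^ (d i) * (c i * 1 / A i) by ring]
    -- logs
    have hlogZmod : Real.log (∑' x : Fin m → ℕ,
        ∏ i, (V ^ (d i) * c i * (A i)⁻¹) ^ (x i) / ((x i).factorial : ℝ) ^ (d i))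
        = ∑ i, Real.log (∑' x : ℕ, (V^(d i) * (c i * 1 / A i)) ^ x / (x.factorial:ℝ)^(d i)) := by
      rw [hZmodeq]
      exact Real.log_prod (fun i _ => (hZipos 1 one_pos i).ne')
    have hlogup : Real.log (∑' x : Fin m → ℕ,
        ∏ i, (V ^ (d i) * c i) ^ (x i) / ∏ j ∈ Finset.range (x i), θ i (j + 1))
        ≤ Real.log C + ∑ i, Real.log (∑' x : ℕ, (V^(d i) * (c i * Real.exp ε / A i)) ^ x / (x.factorial:ℝ)^(d i)) := by
      have h := Real.log_le_log hZθpos hupZ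
      rwa [Real.log_mul hCpos.ne' (Finset.prod_ne_zero_iff.2
          (fun i _ => (hZipos (Real.exp ε) (Real.exp_pos ε) i).ne')),
        Real.log_prod (fun i _ => (hZipos (Real.exp ε) (Real.exp_pos ε) i).ne')] at h
    have hloglo : ∑ i, Real.log (∑' x : ℕ, (V^(d i) * (c i * Real.exp (-ε) / A i)) ^ x / (x.factorial:ℝ)^(d i))
        ≤ Real.log C + Real.log (∑' x : Fin m → ℕ,
        ∏ i, (V ^ (d i) * c i) ^ (x i) / ∏ j ∈ Finset.range (x i), θ i (j + 1)) := by
      have hprodpos : (0:ℝ) < ∏ i, ∑' x : ℕ, (V^(d i) * (c i * Real.exp (-ε) / A i)) ^ x / (x.factorial:ℝ)^(d i) :=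
        Finset.prod_pos (fun i _ => hZipos (Real.exp (-ε)) (Real.exp_pos (-ε)) i)
      have h := Real.log_le_log hprodpos hloZ
      rwa [Real.log_mul hCpos.ne' hZθpos.ne',
        Real.log_prod (fun i _ => (hZipos (Real.exp (-ε)) (Real.exp_pos (-ε)) i).ne')] at h
    -- final sandwich
    rw [Real.norm_eq_abs, abs_lt]
    have hVinv : (0:ℝ) ≤ 1/V := by positivity
    have e1 : Uf V = (1/V) * (Real.log C
        + (∑ i, Real.log (∑' x : ℕ, (V^(d i) * (c i * Real.exp ε / A i)) ^ x / (x.factorial:ℝ)^(d i)))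
        - ∑ i, Real.log (∑' x : ℕ, (V^(d i) * (c i * 1 / A i)) ^ x / (x.factorial:ℝ)^(d i))) := by
      simp only [hUfdef]
      rw [Finset.sum_sub_distrib, ← Finset.mul_sum, ← Finset.mul_sum]
      ring
    have e2 : Lf V = (1/V) * (-Real.log C
        + (∑ i, Real.log (∑' x : ℕ, (V^(d i) * (c i * Real.exp (-ε) / A i)) ^ x / (x.factorial:ℝ)^(d i)))
        - ∑ i, Real.log (∑' x : ℕ, (V^(d i) * (c i * 1 / A i)) ^ x / (x.factorial:ℝ)^(d i))) := by
      simp only [hLfdef]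
      rw [Finset.sum_sub_distrib, ← Finset.mul_sum, ← Finset.mul_sum]
      ring
    have hFle : (1/V) * Real.log (∑' x : Fin m → ℕ,
          ∏ i, (V ^ (d i) * c i) ^ (x i) / ∏ j ∈ Finset.range (x i), θ i (j + 1))
        - (1/V) * Real.log (∑' x : Fin m → ℕ,
          ∏ i, (V ^ (d i) * c i * (A i)⁻¹) ^ (x i) / ((x i).factorial : ℝ) ^ (d i)) ≤ Uf V := by
      have base : Real.log (∑' x : Fin m → ℕ,
            ∏ i, (V ^ (d i) * c i) ^ (x i) / ∏ j ∈ Finset.range (x i), θ i (j + 1))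
          - Real.log (∑' x : Fin m → ℕ,
            ∏ i, (V ^ (d i) * c i * (A i)⁻¹) ^ (x i) / ((x i).factorial : ℝ) ^ (d i))
          ≤ Real.log C
            + (∑ i, Real.log (∑' x : ℕ, (V^(d i) * (c i * Real.exp ε / A i)) ^ x / (x.factorial:ℝ)^(d i)))
            - ∑ i, Real.log (∑' x : ℕ, (V^(d i) * (c i * 1 / A i)) ^ x / (x.factorial:ℝ)^(d i)) := by
        rw [hlogZmod]
        linarith [hlogup]
      calc (1/V) * Real.log (∑' x : Fin m → ℕ,
            ∏ i, (V ^ (d i) * c i) ^ (x i) / ∏ j ∈ Finset.range (x i), θ i (j + 1))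
          - (1/V) * Real.log (∑' x : Fin m → ℕ,
            ∏ i, (V ^ (d i) * c i * (A i)⁻¹) ^ (x i) / ((x i).factorial : ℝ) ^ (d i))
          = (1/V) * (Real.log (∑' x : Fin m → ℕ,
            ∏ i, (V ^ (d i) * c i) ^ (x i) / ∏ j ∈ Finset.range (x i), θ i (j + 1))
            - Real.log (∑' x : Fin m → ℕ,
            ∏ i, (V ^ (d i) * c i * (A i)⁻¹) ^ (x i) / ((x i).factorial : ℝ) ^ (d i))) := by ring
        _ ≤ (1/V) * (Real.log C
            + (∑ i, Real.log (∑' x : ℕ, (V^(d i) * (c i * Real.exp ε / A i)) ^ x / (x.factorial:ℝ)^(d i)))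
            - ∑ i, Real.log (∑' x : ℕ, (V^(d i) * (c i * 1 / A i)) ^ x / (x.factorial:ℝ)^(d i))) :=
          mul_le_mul_of_nonneg_left base hVinv
        _ = Uf V := e1.symm
    have hleF : Lf V ≤ (1/V) * Real.log (∑' x : Fin m → ℕ,
          ∏ i, (V ^ (d i) * c i) ^ (x i) / ∏ j ∈ Finset.range (x i), θ i (j + 1))
        - (1/V) * Real.log (∑' x : Fin m → ℕ,
          ∏ i, (V ^ (d i) * c i * (A i)⁻¹) ^ (x i) / ((x i).factorial : ℝ) ^ (d i)) := by
      have base : -Real.log C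
            + (∑ i, Real.log (∑' x : ℕ, (V^(d i) * (c i * Real.exp (-ε) / A i)) ^ x / (x.factorial:ℝ)^(d i)))
            - ∑ i, Real.log (∑' x : ℕ, (V^(d i) * (c i * 1 / A i)) ^ x / (x.factorial:ℝ)^(d i))
          ≤ Real.log (∑' x : Fin m → ℕ,
            ∏ i, (V ^ (d i) * c i) ^ (x i) / ∏ j ∈ Finset.range (x i), θ i (j + 1))
          - Real.log (∑' x : Fin m → ℕ,
            ∏ i, (V ^ (d i) * c i * (A i)⁻¹) ^ (x i) / ((x i).factorial : ℝ) ^ (d i)) := by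
        rw [hlogZmod]
        linarith [hloglo]
      calc Lf V = (1/V) * (-Real.log C
            + (∑ i, Real.log (∑' x : ℕ, (V^(d i) * (c i * Real.exp (-ε) / A i)) ^ x / (x.factorial:ℝ)^(d i)))
            - ∑ i, Real.log (∑' x : ℕ, (V^(d i) * (c i * 1 / A i)) ^ x / (x.factorial:ℝ)^(d i))) := e2
        _ ≤ (1/V) * (Real.log (∑' x : Fin m → ℕ,
            ∏ i, (V ^ (d i) * c i) ^ (x i) / ∏ j ∈ Finset.range (x i), θ i (j + 1))
          - Real.log (∑' x : Fin m → ℕ,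
            ∏ i, (V ^ (d i) * c i * (A i)⁻¹) ^ (x i) / ((x i).factorial : ℝ) ^ (d i))) :=
          mul_le_mul_of_nonneg_left base hVinv
        _ = _ := by ring
    exact ⟨lt_of_lt_of_le hl hleF, lt_of_le_of_lt hFle hu⟩
end

section
/- Let a reaction network on m species with reactions y_k → y_k' (k = 1,…,K) be weakly reversible and have deficiency zero, i.e. |C| − ℓ − s = 0, where |C| is the number of complexes, ℓ is the number of connected components (linkage classes) of the reaction graph, and s = dim span_ℝ{y_k' − y_k : 1 ≤ k ≤ K}. Then for every choice of rate constants κ_k > 0 there exists c ∈ ℝ^m_{>0} that is a complex balanced equilibrium: for every complex z ∈ C, ∑_{k : y_k' = z} κ_k c^{y_k} = ∑_{k : y_k = z} κ_k c^{y_k}. -/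
open Finset Filter

/-- General (non-mass action) intensity function:
`λ_k(x) = κ_k ∏_i ∏_{j=0}^{y_{ki}-1} θ_i(x_i - j)`. -/
noncomputable def genIntensity (m K : ℕ) (y : Fin K → Fin m → ℕ) (κ : Fin K → ℝ)
    (θ : Fin m → ℤ → ℝ) (k : Fin K) (x : Fin m → ℤ) : ℝ :=
  κ k * ∏ i, ∏ j ∈ Finset.range (y k i), θ i (x i - j)

/-- Product-form measure `π_c(x) = ∏_i c_i^{x_i} / ∏_{j=1}^{x_i} θ_i(j)`,
extended by `0` outside `ℤ^m_{≥0}`. -/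
noncomputable def prodForm (m : ℕ) (c : Fin m → ℝ) (θ : Fin m → ℤ → ℝ)
    (x : Fin m → ℤ) : ℝ :=
  if ∀ i, 0 ≤ x i then
    ∏ i, (c i ^ (x i).toNat / ∏ j ∈ Finset.range (x i).toNat, θ i (j + 1))
  else 0

/-- `c` is a complex balanced equilibrium: for each complex `z`,
`∑_{k : y_k' = z} κ_k c^{y_k} = ∑_{k : y_k = z} κ_k c^{y_k}`. -/
def complexBalanced (m K : ℕ) (y y' : Fin K → Fin m → ℕ) (κ : Fin K → ℝ)
    (c : Fin m → ℝ) : Prop :=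
  ∀ z : Fin m → ℕ, ((∃ k, y k = z) ∨ (∃ k, y' k = z)) →
    ∑ k ∈ Finset.univ.filter (fun k => y' k = z), κ k * ∏ i, c i ^ y k i =
    ∑ k ∈ Finset.univ.filter (fun k => y k = z), κ k * ∏ i, c i ^ y k i

/-- The stationarity equation:
`∑_k μ(x - y_k' + y_k) λ_k(x - y_k' + y_k) = μ(x) ∑_k λ_k(x)` for all `x ∈ ℤ^m_{≥0}`. -/
def stationaryEq (m K : ℕ) (y y' : Fin K → Fin m → ℕ)
    (μ : (Fin m → ℤ) → ℝ) (lam : Fin K → (Fin m → ℤ) → ℝ) : Prop :=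
  ∀ x : Fin m → ℕ,
    ∑ k : Fin K, μ (fun i => (x i : ℤ) - y' k i + y k i) *
        lam k (fun i => (x i : ℤ) - y' k i + y k i)
      = μ (fun i => (x i : ℤ)) * ∑ k : Fin K, lam k (fun i => (x i : ℤ))

/-- The one-step (directed) edge relation of the reaction graph: `a → b` iff some
reaction has source `a` and product `b`. -/
def reactionEdge (m K : ℕ) (y y' : Fin K → Fin m → ℕ) (a b : Fin m → ℕ) : Prop :=
  ∃ k, y k = a ∧ y' k = b


section DZ
variable {m K : ℕ} {y y' : Fin K → Fin m → ℕ}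

lemma dz_rtg_symm
    (hwr : ∀ k, Relation.ReflTransGen (reactionEdge m K y y') (y' k) (y k)) :
    ∀ a b, Relation.ReflTransGen (reactionEdge m K y y') a b →
      Relation.ReflTransGen (reactionEdge m K y y') b a := by
  intro a b h
  induction h with
  | refl => exact .refl
  | tail hab hbc ih =>
    obtain ⟨k, hk1, hk2⟩ := hbc
    exact Relation.ReflTransGen.trans (hk2 ▸ hk1 ▸ hwr k) ih

lemma dz_eqvGen_rtg
    (hwr : ∀ k, Relation.ReflTransGen (reactionEdge m K y y') (y' k) (y k)) :
    ∀ a b, Relation.EqvGen (reactionEdge m K y y') a b →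
      Relation.ReflTransGen (reactionEdge m K y y') a b := by
  intro a b h
  induction h with
  | rel a b hab => exact Relation.ReflTransGen.single hab
  | refl a => exact .refl
  | symm a b _ ih => exact dz_rtg_symm hwr _ _ ih
  | trans a b c _ _ ih1 ih2 => exact ih1.trans ih2

lemma dz_diff_mem_span {a b : Fin m → ℕ}
    (h : Relation.EqvGen (reactionEdge m K y y') a b) :
    (fun i => (b i : ℝ) - (a i : ℝ)) ∈ Submodule.span ℝ
      (Set.range (fun k : Fin K => fun i : Fin m => ((y' k i : ℝ) - (y k i : ℝ)))) := by
  induction h with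
  | rel a b hab =>
    obtain ⟨k, hk1, hk2⟩ := hab
    exact Submodule.subset_span ⟨k, by subst hk1; subst hk2; rfl⟩
  | refl a =>
    have he : (fun i => (a i : ℝ) - a i) = (0 : Fin m → ℝ) := by funext i; simp
    rw [he]; exact Submodule.zero_mem _
  | symm a b _ ih =>
    have he : (fun i => (a i : ℝ) - b i) = -(fun i => ((b i : ℝ) - a i)) := by
      funext i; simp
    rw [he]; exact Submodule.neg_mem _ ih
  | trans a b c _ _ ih1 ih2 =>
    have he : (fun i => (c i : ℝ) - a i)
        = (fun i => ((b i : ℝ) - a i)) + (fun i => ((c i : ℝ) - b i)) := by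
      funext i; simp only [Pi.add_apply]; ring
    rw [he]; exact Submodule.add_mem _ ih1 ih2

/-- Elementary Perron-type lemma for column-Laplacians. -/
lemma dz_perron {ι : Type*} [Fintype ι] [DecidableEq ι] [Nonempty ι] (A : Matrix ι ι ℝ)
    (hoff : ∀ z w, z ≠ w → 0 ≤ A z w) (hcol : ∀ w, ∑ z, A z w = 0) :
    ∃ φ : ι → ℝ, (∀ z, 0 ≤ φ z) ∧ (∃ z, 0 < φ z) ∧ A.mulVec φ = 0 := by
  classical
  have hdet : A.det = 0 := by
    rw [← Matrix.det_transpose]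
    refine Matrix.exists_mulVec_eq_zero_iff.mp ⟨fun _ => 1, ?_, ?_⟩
    · intro h; have := congrFun h (Classical.arbitrary ι); simp at this
    · funext w; simp [Matrix.mulVec, dotProduct, Matrix.transpose, hcol w]
  obtain ⟨ψ0, hψ0ne, hψ0⟩ := Matrix.exists_mulVec_eq_zero_iff.mpr hdet
  obtain ⟨ψ, hψ, z₁, hz₁⟩ : ∃ ψ : ι → ℝ, A.mulVec ψ = 0 ∧ ∃ z, 0 < ψ z := by
    by_cases h : ∃ z, 0 < ψ0 z
    · exact ⟨ψ0, hψ0, h⟩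
    · push_neg at h
      refine ⟨-ψ0, by simp [Matrix.mulVec_neg, hψ0], ?_⟩
      have : ∃ z, ψ0 z ≠ 0 := by
        by_contra hc; push_neg at hc; exact hψ0ne (funext hc)
      obtain ⟨z, hz⟩ := this
      exact ⟨z, by simpa using lt_of_le_of_ne (h z) hz⟩
  set φ : ι → ℝ := fun z => max (ψ z) 0 with hφdef
  have hφ0 : ∀ z, 0 ≤ φ z := fun z => le_max_right _ _
  have hφψ : ∀ z, ψ z ≤ φ z := fun z => le_max_left _ _
  set β : ℝ := 1 + ∑ w, (-A w w) with hβdef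
  have hAzz : ∀ z, 0 ≤ -A z z := by
    intro z
    have h1 : A z z + ∑ w ∈ univ.erase z, A w z = 0 := by
      rw [← hcol z, ← Finset.add_sum_erase _ _ (mem_univ z)]
    have h2 : 0 ≤ ∑ w ∈ univ.erase z, A w z :=
      Finset.sum_nonneg fun w hw => hoff _ _ (Finset.ne_of_mem_erase hw)
    linarith
  have hβ : 0 < β := by
    have : 0 ≤ ∑ w, (-A w w) := Finset.sum_nonneg fun w _ => hAzz w
    simp only [hβdef]; linarith
  have hβA : ∀ z, 0 ≤ β + A z z := by
    intro z
    have : -A z z ≤ ∑ w, (-A w w) :=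
      Finset.single_le_sum (fun w _ => hAzz w) (mem_univ z)
    simp only [hβdef]; linarith
  set M : Matrix ι ι ℝ := fun z w => A z w + if z = w then β else 0 with hMdef
  have hM : ∀ z w, 0 ≤ M z w := by
    intro z w
    by_cases h : z = w
    · subst h; have := hβA z; simp only [hMdef, if_true, eq_self_iff_true]; linarith
    · simpa [hMdef, h] using hoff z w h
  have hMcol : ∀ w, ∑ z, M z w = β := by
    intro w
    simp only [hMdef, Finset.sum_add_distrib, hcol w, Finset.sum_ite_eq', mem_univ, if_true,
      zero_add]
  have hMψ : ∀ z, ∑ w, M z w * ψ w = β * ψ z := by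
    intro z
    have h0 : ∑ w, A z w * ψ w = 0 := congrFun hψ z
    simp only [hMdef, add_mul, Finset.sum_add_distrib, h0, zero_add, ite_mul, zero_mul,
      Finset.sum_ite_eq, mem_univ, if_true]
  have key1 : ∀ z, β * φ z ≤ ∑ w, M z w * φ w := by
    intro z
    by_cases h : 0 < ψ z
    · have hz : φ z = ψ z := max_eq_left h.le
      rw [hz, ← hMψ z]
      exact Finset.sum_le_sum fun w _ => mul_le_mul_of_nonneg_left (hφψ w) (hM z w)
    · have hz : φ z = 0 := max_eq_right (not_lt.mp h)
      rw [hz, mul_zero]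
      exact Finset.sum_nonneg fun w _ => mul_nonneg (hM z w) (hφ0 w)
  have key2 : ∑ z, (∑ w, M z w * φ w - β * φ z) = 0 := by
    rw [Finset.sum_sub_distrib, Finset.sum_comm]
    have : ∀ w, ∑ z, M z w * φ w = β * φ w := by
      intro w; rw [← Finset.sum_mul, hMcol w]
    simp [this]
  have keyz : ∀ z ∈ univ, ∑ w, M z w * φ w - β * φ z = 0 :=
    (Finset.sum_eq_zero_iff_of_nonneg (fun z _ => sub_nonneg.mpr (key1 z))).mp key2
  refine ⟨φ, hφ0, ⟨z₁, lt_of_lt_of_le hz₁ (hφψ z₁)⟩, ?_⟩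
  funext z
  have hz := keyz z (mem_univ z)
  have : ∑ w, M z w * φ w = β * φ z := by linarith
  have hexp : ∑ w, M z w * φ w = (∑ w, A z w * φ w) + β * φ z := by
    simp only [hMdef, add_mul, Finset.sum_add_distrib, ite_mul, zero_mul,
      Finset.sum_ite_eq, mem_univ, if_true]
  simp only [Matrix.mulVec, dotProduct, Pi.zero_apply]
  linarith [hexp ▸ this]

end DZ


lemma dz_fiber_sum {α : Type*} [DecidableEq α] {K : ℕ} (Sfin : Set α) [Fintype ↥Sfin]
    (P : Fin K → Prop) [DecidablePred P] (tgt : Fin K → α) (hmem : ∀ k, P k → tgt k ∈ Sfin)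
    (val : Fin K → ℝ) (w : α → ℝ) :
    ∑ zz : ↥Sfin, (∑ k ∈ Finset.univ.filter (fun k => P k ∧ tgt k = ↑zz), val k) * w ↑zz
      = ∑ k ∈ Finset.univ.filter P, val k * w (tgt k) := by
  simp only [Finset.sum_mul, Finset.sum_filter, ite_mul, zero_mul]
  rw [Finset.sum_comm]
  refine Finset.sum_congr rfl fun k _ => ?_
  by_cases hP : P k
  · have hmem' := hmem k hP
    have hcond : ∀ zz : ↥Sfin, (P k ∧ tgt k = ↑zz) ↔ (zz = ⟨tgt k, hmem'⟩) := by
      intro zz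
      constructor
      · rintro ⟨-, h⟩; exact Subtype.ext h.symm
      · rintro rfl; exact ⟨hP, rfl⟩
    calc ∑ zz : ↥Sfin, (if P k ∧ tgt k = ↑zz then val k * w ↑zz else 0)
        = ∑ zz : ↥Sfin, (if zz = ⟨tgt k, hmem'⟩ then val k * w ↑zz else 0) := by
          refine Finset.sum_congr rfl fun zz _ => ?_
          rw [if_congr (hcond zz) rfl rfl]
      _ = val k * w (tgt k) := by
          rw [Finset.sum_ite_eq' Finset.univ (⟨tgt k, hmem'⟩ : ↥Sfin)
            (fun zz => val k * w ↑zz)]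
          simp
      _ = if P k then val k * w (tgt k) else 0 := by rw [if_pos hP]
  · simp [hP]

section DZ2
variable {m K : ℕ} (y y' : Fin K → Fin m → ℕ)

def dzC : Set (Fin m → ℕ) := Set.range y ∪ Set.range y'

def dzS (z : Fin m → ℕ) : Set (Fin m → ℕ) :=
  {w | w ∈ dzC y y' ∧ Relation.EqvGen (reactionEdge m K y y') z w}

variable {y y'}

lemma dzC_finite : (dzC y y').Finite := (Set.finite_range y).union (Set.finite_range y')

lemma dzS_finite (z : Fin m → ℕ) : (dzS y y' z).Finite :=
  dzC_finite.subset fun w hw => hw.1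

lemma dzS_eq {a b : Fin m → ℕ} (hab : Relation.EqvGen (reactionEdge m K y y') a b) :
    dzS y y' a = dzS y y' b := by
  ext w
  simp only [dzS, Set.mem_setOf_eq, and_congr_right_iff]
  intro _
  exact ⟨fun h => Relation.EqvGen.trans _ _ _ (Relation.EqvGen.symm _ _ hab) h,
    fun h => Relation.EqvGen.trans _ _ _ hab h⟩

lemma dzS_self {z : Fin m → ℕ} (hz : z ∈ dzC y y') : z ∈ dzS y y' z :=
  ⟨hz, Relation.EqvGen.refl _⟩

lemma dz_part1
    (hwr : ∀ k, Relation.ReflTransGen (reactionEdge m K y y') (y' k) (y k))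
    (κ : Fin K → ℝ) (hκ : ∀ k, 0 < κ k) :
    ∃ ψ : (Fin m → ℕ) → ℝ,
      (∀ z ∈ dzC y y', 0 < ψ z) ∧
      (∀ z ∈ dzC y y',
        ∑ k ∈ Finset.univ.filter (fun k => y' k = z), κ k * ψ (y k)
          = (∑ k ∈ Finset.univ.filter (fun k => y k = z), κ k) * ψ z) := by
  classical
  have hcomp : ∀ z₀, ∃ φ : (Fin m → ℕ) → ℝ,
      z₀ ∈ dzC y y' → ((∀ w ∈ dzS y y' z₀, 0 < φ w) ∧
      (∀ z ∈ dzS y y' z₀,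
        ∑ k ∈ Finset.univ.filter (fun k => y' k = z), κ k * φ (y k)
          = (∑ k ∈ Finset.univ.filter (fun k => y k = z), κ k) * φ z)) := by
    intro z₀
    by_cases hz₀ : z₀ ∈ dzC y y'
    case neg => exact ⟨fun _ => 1, fun h => absurd h hz₀⟩
    case pos =>
    haveI : Fintype ↥(dzS y y' z₀) := (dzS_finite z₀).fintype
    haveI : Nonempty ↥(dzS y y' z₀) := ⟨⟨z₀, dzS_self hz₀⟩⟩
    set A : Matrix ↥(dzS y y' z₀) ↥(dzS y y' z₀) ℝ := fun zz ww =>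
      (∑ k ∈ Finset.univ.filter (fun k => y k = ↑ww ∧ y' k = ↑zz), κ k)
        - (if zz = ww then ∑ k ∈ Finset.univ.filter (fun k => y k = ↑ww), κ k else 0) with hA
    have hmemy' : ∀ (ww : ↥(dzS y y' z₀)) (k : Fin K), y k = ↑ww → y' k ∈ dzS y y' z₀ := by
      intro ww k hk
      exact ⟨Or.inr ⟨k, rfl⟩,
        Relation.EqvGen.trans _ _ _ ww.2.2 (Relation.EqvGen.rel _ _ ⟨k, hk, rfl⟩)⟩
    have hmemy : ∀ (zz : ↥(dzS y y' z₀)) (k : Fin K), y' k = ↑zz → y k ∈ dzS y y' z₀ := by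
      intro zz k hk
      exact ⟨Or.inl ⟨k, rfl⟩,
        Relation.EqvGen.trans _ _ _ zz.2.2
          (Relation.EqvGen.symm _ _ (Relation.EqvGen.rel _ _ ⟨k, rfl, hk⟩))⟩
    have hoff : ∀ zz ww, zz ≠ ww → 0 ≤ A zz ww := by
      intro zz ww h
      simp only [hA, if_neg h, sub_zero]
      exact Finset.sum_nonneg fun k _ => (hκ k).le
    have hcol : ∀ ww, ∑ zz, A zz ww = 0 := by
      intro ww
      have h1 := dz_fiber_sum (dzS y y' z₀) (fun k => y k = ↑ww) y'
        (fun k hk => hmemy' ww k hk) κ (fun _ => 1)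
      simp only [mul_one] at h1
      simp only [hA, Finset.sum_sub_distrib, h1]
      rw [Finset.sum_ite_eq' Finset.univ ww
        (fun _ => ∑ k ∈ Finset.univ.filter (fun k => y k = ↑ww), κ k)]
      simp
    obtain ⟨φ0, hφ0nonneg, ⟨zstar, hzstar⟩, hφ0eq⟩ := dz_perron A hoff hcol
    have heq : ∀ zz : ↥(dzS y y' z₀), ∑ ww, A zz ww * φ0 ww = 0 := by
      intro zz
      have := congrFun hφ0eq zz
      simpa [Matrix.mulVec, dotProduct] using this
    set φhat : (Fin m → ℕ) → ℝ := fun w => if h : w ∈ dzS y y' z₀ then φ0 ⟨w, h⟩ else 0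
      with hφhat
    have hφhatval : ∀ ww : ↥(dzS y y' z₀), φhat ↑ww = φ0 ww := by
      intro ww
      simp only [hφhat, dif_pos ww.2]
    have hφhatnonneg : ∀ w, 0 ≤ φhat w := by
      intro w
      by_cases h : w ∈ dzS y y' z₀
      · simp only [hφhat, dif_pos h]; exact hφ0nonneg _
      · simp only [hφhat, dif_neg h]; exact le_refl 0
    have hbal : ∀ zz : ↥(dzS y y' z₀),
        ∑ k ∈ Finset.univ.filter (fun k => y' k = ↑zz), κ k * φhat (y k)
          = (∑ k ∈ Finset.univ.filter (fun k => y k = ↑zz), κ k) * φhat ↑zz := by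
      intro zz
      have h2 := dz_fiber_sum (dzS y y' z₀) (fun k => y' k = ↑zz) y
        (fun k hk => hmemy zz k hk) κ φhat
      have h4 : ∑ ww : ↥(dzS y y' z₀), A zz ww * φ0 ww
          = (∑ ww : ↥(dzS y y' z₀),
              (∑ k ∈ Finset.univ.filter (fun k => y k = ↑ww ∧ y' k = ↑zz), κ k) * φ0 ww)
            - (∑ k ∈ Finset.univ.filter (fun k => y k = ↑zz), κ k) * φ0 zz := by
        simp only [hA, sub_mul, Finset.sum_sub_distrib, ite_mul, zero_mul,
          Finset.sum_ite_eq, Finset.mem_univ, if_true]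
      have h5 : ∀ ww : ↥(dzS y y' z₀),
          Finset.univ.filter (fun k => y k = (↑ww : Fin m → ℕ) ∧ y' k = ↑zz)
            = Finset.univ.filter (fun k => y' k = (↑zz : Fin m → ℕ) ∧ y k = ↑ww) := by
        intro ww
        exact Finset.filter_congr (fun k _ => by tauto)
      have h6 : ∑ ww : ↥(dzS y y' z₀),
          (∑ k ∈ Finset.univ.filter (fun k => y k = ↑ww ∧ y' k = ↑zz), κ k) * φ0 ww
          = ∑ k ∈ Finset.univ.filter (fun k => y' k = ↑zz), κ k * φhat (y k) := by
        rw [← h2]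
        refine Finset.sum_congr rfl fun ww _ => ?_
        rw [h5 ww, hφhatval ww]
      have h7 := heq zz
      rw [h4, h6] at h7
      rw [hφhatval zz]
      linarith
    have hpos0 : ∀ zz : ↥(dzS y y' z₀), 0 < φ0 zz := by
      have hprop : ∀ b, Relation.ReflTransGen (reactionEdge m K y y') ↑zstar b →
          ∀ hb : b ∈ dzS y y' z₀, 0 < φ0 ⟨b, hb⟩ := by
        intro b hrtg
        induction hrtg with
        | refl =>
          intro hb
          have : (⟨↑zstar, hb⟩ : ↥(dzS y y' z₀)) = zstar := Subtype.ext rfl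
          rw [this]; exact hzstar
        | tail hab hbc ih =>
          rename_i b' c
          intro hc
          obtain ⟨k, hk1, hk2⟩ := hbc
          have hbmem : b' ∈ dzS y y' z₀ := by
            refine ⟨Or.inl ⟨k, hk1⟩, Relation.EqvGen.trans _ _ _ hc.2
              (Relation.EqvGen.symm _ _ (Relation.EqvGen.rel _ _ ⟨k, hk1, hk2⟩))⟩
          have hb' := ih hbmem
          have hbalc := hbal ⟨c, hc⟩
          have hkmem : k ∈ Finset.univ.filter (fun k' => y' k' = c) := by
            simp [hk2]
          have hlow : κ k * φhat (y k) ≤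
              ∑ k' ∈ Finset.univ.filter (fun k' => y' k' = c), κ k' * φhat (y k') :=
            Finset.single_le_sum
              (fun k' _ => mul_nonneg (hκ k').le (hφhatnonneg _)) hkmem
          have hterm : 0 < κ k * φhat (y k) := by
            have : φhat (y k) = φ0 ⟨b', hbmem⟩ := by
              rw [hk1]; exact hφhatval ⟨b', hbmem⟩
            rw [this]; exact mul_pos (hκ k) hb'
          have hrhs : 0 < (∑ k' ∈ Finset.univ.filter (fun k' => y k' = c), κ k')
              * φhat c := by
            have : (0:ℝ) < ∑ k' ∈ Finset.univ.filter (fun k' => y' k' = c),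
                κ k' * φhat (y k') := lt_of_lt_of_le hterm hlow
            calc (0:ℝ) < _ := this
              _ = _ := hbalc
          have hne : φhat c ≠ 0 := by
            intro h0; rw [h0, mul_zero] at hrhs; exact lt_irrefl 0 hrhs
          have := lt_of_le_of_ne (hφhatnonneg c) (Ne.symm hne)
          simp only [hφhat, dif_pos hc] at this
          exact this
      intro zz
      have hconn : Relation.EqvGen (reactionEdge m K y y') ↑zstar ↑zz :=
        Relation.EqvGen.trans _ _ _ (Relation.EqvGen.symm _ _ zstar.2.2) zz.2.2
      have := hprop ↑zz (dz_eqvGen_rtg hwr _ _ hconn) zz.2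
      simpa using this
    refine ⟨φhat, fun _ => ⟨?_, ?_⟩⟩
    · intro w hw
      have := hpos0 ⟨w, hw⟩
      rwa [← hφhatval ⟨w, hw⟩] at this
    · intro z hz
      exact hbal ⟨z, hz⟩
  choose Φ hΦ using hcomp
  set rep' : Set (Fin m → ℕ) → (Fin m → ℕ) :=
    fun s => if h : s.Nonempty then h.some else fun _ => 0 with hrep'
  set rep : (Fin m → ℕ) → (Fin m → ℕ) := fun z => rep' (dzS y y' z) with hrep
  have hrepmem : ∀ z ∈ dzC y y', rep z ∈ dzS y y' z := by
    intro z hz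
    have hne : (dzS y y' z).Nonempty := ⟨z, dzS_self hz⟩
    simp only [hrep, hrep', dif_pos hne]
    exact hne.some_mem
  have hrepeq : ∀ a b, Relation.EqvGen (reactionEdge m K y y') a b → rep a = rep b := by
    intro a b hab
    simp only [hrep]
    rw [dzS_eq hab]
  have hrepC : ∀ z ∈ dzC y y', rep z ∈ dzC y y' := fun z hz => (hrepmem z hz).1
  have hmemrep : ∀ z ∈ dzC y y', z ∈ dzS y y' (rep z) := by
    intro z hz
    exact ⟨hz, Relation.EqvGen.symm _ _ (hrepmem z hz).2⟩
  refine ⟨fun z => Φ (rep z) z, ?_, ?_⟩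
  · intro z hz
    exact (hΦ (rep z) (hrepC z hz)).1 z (hmemrep z hz)
  · intro z hz
    have hb := (hΦ (rep z) (hrepC z hz)).2 z (hmemrep z hz)
    rw [← hb]
    refine Finset.sum_congr rfl fun k hk => ?_
    simp only [Finset.mem_filter] at hk
    have : rep (y k) = rep z := by
      refine hrepeq _ _ ?_
      exact Relation.EqvGen.rel _ _ ⟨k, rfl, hk.2⟩
    show κ k * Φ (rep (y k)) (y k) = κ k * Φ (rep z) (y k)
    rw [this]

end DZ2

section DZ3
open Finset
variable {m K : ℕ} {y y' : Fin K → Fin m → ℕ}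

set_option maxHeartbeats 2000000 in
lemma dz_part2
    (hdef : (dzC y y').ncard = {t : Set (Fin m → ℕ) | ∃ z ∈ dzC y y', t = dzS y y' z}.ncard
        + Module.finrank ℝ (Submodule.span ℝ
            (Set.range (fun k : Fin K => fun i : Fin m => ((y' k i : ℝ) - (y k i : ℝ))))))
    (F : (Fin m → ℕ) → ℝ) :
    ∃ (v : Fin m → ℝ) (g : (Fin m → ℕ) → ℝ),
      (∀ a b, Relation.EqvGen (reactionEdge m K y y') a b → g a = g b) ∧
      (∀ z ∈ dzC y y', F z = (∑ i, (z i : ℝ) * v i) + g z) := by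
  classical
  haveI : Fintype ↥(dzC y y') := dzC_finite.fintype
  set Ts : Set (Set (Fin m → ℕ)) := {t | ∃ z ∈ dzC y y', t = dzS y y' z} with hTs
  have hTsfin : Ts.Finite := by
    have : Ts = (fun z => dzS y y' z) '' (dzC y y') := by
      ext t; simp [hTs, eq_comm, Set.mem_image]
    rw [this]
    exact dzC_finite.image _
  haveI : Fintype ↥Ts := hTsfin.fintype
  set L : (Fin m → ℝ) ≃ₗ[ℝ] EuclideanSpace ℝ (Fin m) :=
    (WithLp.linearEquiv 2 ℝ (Fin m → ℝ)).symm with hL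
  have hLapp : ∀ (u : Fin m → ℝ) (i : Fin m), L u i = u i := fun u i => rfl
  set Fvec : Fin K → (Fin m → ℝ) := fun k => fun i => ((y' k i : ℝ) - (y k i : ℝ)) with hFvec
  set Sp : Submodule ℝ (Fin m → ℝ) := Submodule.span ℝ (Set.range Fvec) with hSp
  set S₂ : Submodule ℝ (EuclideanSpace ℝ (Fin m)) := Sp.map (L : (Fin m → ℝ) →ₗ[ℝ] EuclideanSpace ℝ (Fin m)) with hS₂
  have hinner : ∀ u w : EuclideanSpace ℝ (Fin m),
      (inner ℝ u w : ℝ) = ∑ i, u i * w i := by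
    intro u w
    simp [PiLp.inner_apply, RCLike.inner_apply, conj_trivial, mul_comm]
  have horth : ∀ v : EuclideanSpace ℝ (Fin m), v ∈ S₂ᗮ →
      ∀ a b : Fin m → ℕ, Relation.EqvGen (reactionEdge m K y y') a b →
        ∑ i, (b i : ℝ) * v i = ∑ i, (a i : ℝ) * v i := by
    intro v hv a b hab
    have hd : (fun i => (b i : ℝ) - (a i : ℝ)) ∈ Sp := dz_diff_mem_span hab
    have h0 : (inner ℝ (L (fun i => (b i : ℝ) - (a i : ℝ))) v : ℝ) = 0 :=
      (Submodule.mem_orthogonal _ _).1 hv _ (Submodule.mem_map_of_mem hd)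
    rw [hinner] at h0
    simp only [hLapp, sub_mul, Finset.sum_sub_distrib] at h0
    linarith
  have hTne : ∀ t : ↥Ts, ∃ z, z ∈ dzC y y' ∧ (t : Set (Fin m → ℕ)) = dzS y y' z := by
    intro t; obtain ⟨z, hz, ht⟩ := t.2; exact ⟨z, hz, ht⟩
  choose repT hrepT1 hrepT2 using hTne
  set cls : ↥(dzC y y') → ↥Ts := fun z => ⟨dzS y y' ↑z, ⟨↑z, z.2, rfl⟩⟩ with hcls
  have hclsconn : ∀ z : ↥(dzC y y'),
      Relation.EqvGen (reactionEdge m K y y') ↑z (repT (cls z)) := by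
    intro z
    have h2 := hrepT2 (cls z)
    have : (repT (cls z)) ∈ dzS y y' (↑z : Fin m → ℕ) := by
      show repT (cls z) ∈ (↑(cls z) : Set (Fin m → ℕ))
      rw [h2]; exact dzS_self (hrepT1 (cls z))
    exact this.2
  set T1 : EuclideanSpace ℝ (Fin m) →ₗ[ℝ] (↥(dzC y y') → ℝ) :=
    { toFun := fun v z => ∑ i, ((z : Fin m → ℕ) i : ℝ) * v i
      map_add' := by
        intro u w; funext z
        simp only [Pi.add_apply, PiLp.add_apply, mul_add, Finset.sum_add_distrib]
      map_smul' := by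
        intro c u; funext z
        simp only [RingHom.id_apply, Pi.smul_apply, PiLp.smul_apply, smul_eq_mul,
          Finset.mul_sum]
        exact Finset.sum_congr rfl fun i _ => by ring } with hT1
  set G : (↥Ts → ℝ) →ₗ[ℝ] (↥(dzC y y') → ℝ) := LinearMap.funLeft ℝ ℝ cls with hG
  set Ψ : (EuclideanSpace ℝ (Fin m) × (↥Ts → ℝ)) →ₗ[ℝ] (↥(dzC y y') → ℝ) :=
    T1.comp (LinearMap.fst ℝ _ _) + G.comp (LinearMap.snd ℝ _ _) with hΨ
  have hΨapp : ∀ (v : EuclideanSpace ℝ (Fin m)) (g : ↥Ts → ℝ) (z : ↥(dzC y y')),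
      Ψ (v, g) z = (∑ i, ((z : Fin m → ℕ) i : ℝ) * v i) + g (cls z) := fun v g z => rfl
  set J : ↥(S₂ᗮ) →ₗ[ℝ] (EuclideanSpace ℝ (Fin m) × (↥Ts → ℝ)) :=
    { toFun := fun v => (↑v,
        fun t => -∑ i, ((repT t) i : ℝ) * (v : EuclideanSpace ℝ (Fin m)) i)
      map_add' := by
        intro u w
        refine Prod.ext rfl ?_
        funext t
        simp only [Submodule.coe_add, PiLp.add_apply, Prod.snd_add, Pi.add_apply, mul_add,
          Finset.sum_add_distrib]
        ring
      map_smul' := by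
        intro c u
        refine Prod.ext rfl ?_
        funext t
        simp only [RingHom.id_apply, Submodule.coe_smul, PiLp.smul_apply, Prod.smul_snd,
          Pi.smul_apply, smul_eq_mul, mul_neg, Finset.mul_sum, neg_inj]
        exact Finset.sum_congr rfl fun i _ => by ring } with hJ
  have hJker : ∀ v : ↥(S₂ᗮ), J v ∈ LinearMap.ker Ψ := by
    intro v
    rw [LinearMap.mem_ker]
    funext z
    have h1 := horth ↑v v.2 ↑z (repT (cls z)) (hclsconn z)
    show Ψ (↑v, fun t => -∑ i, ((repT t) i : ℝ) * (v : EuclideanSpace ℝ (Fin m)) i) z = 0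
    rw [hΨapp]
    show (∑ i, ((z : Fin m → ℕ) i : ℝ) * (v : EuclideanSpace ℝ (Fin m)) i)
        + -(∑ i, ((repT (cls z)) i : ℝ) * (v : EuclideanSpace ℝ (Fin m)) i) = 0
    rw [h1]; ring
  set Jk : ↥(S₂ᗮ) →ₗ[ℝ] ↥(LinearMap.ker Ψ) := J.codRestrict (LinearMap.ker Ψ) hJker with hJk
  have hJinj : Function.Injective Jk := by
    intro u w h
    have := congrArg (fun x : ↥(LinearMap.ker Ψ) =>
      ((↑x : EuclideanSpace ℝ (Fin m) × (↥Ts → ℝ))).1) h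
    exact Subtype.ext this
  have hJsurj : Function.Surjective Jk := by
    rintro ⟨⟨v, g⟩, hvg⟩
    rw [LinearMap.mem_ker] at hvg
    have hz0 : ∀ z : ↥(dzC y y'),
        (∑ i, ((z : Fin m → ℕ) i : ℝ) * v i) + g (cls z) = 0 := by
      intro z
      have := congrFun hvg z
      rwa [hΨapp] at this
    have hvS : v ∈ S₂ᗮ := by
      rw [Submodule.mem_orthogonal]
      intro u hu
      obtain ⟨u₀, hu₀, rfl⟩ := hu
      induction hu₀ using Submodule.span_induction with
      | mem x hx =>
        obtain ⟨k, rfl⟩ := hx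
        rw [hinner]
        have hyC : y k ∈ dzC y y' := Or.inl ⟨k, rfl⟩
        have hy'C : y' k ∈ dzC y y' := Or.inr ⟨k, rfl⟩
        have hclseq : cls ⟨y k, hyC⟩ = cls ⟨y' k, hy'C⟩ := by
          refine Subtype.ext ?_
          exact dzS_eq (Relation.EqvGen.rel _ _ ⟨k, rfl, rfl⟩)
        have e1 := hz0 ⟨y k, hyC⟩
        have e2 := hz0 ⟨y' k, hy'C⟩
        rw [hclseq] at e1
        have : ∀ i, L (Fvec k) i * v i = ((y' k i : ℝ) * v i - (y k i : ℝ) * v i) := by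
          intro i
          rw [hLapp]
          simp only [hFvec]
          ring
        simp only [LinearEquiv.coe_coe, this, Finset.sum_sub_distrib]
        simp only [Subtype.mk.injEq] at e1 e2 ⊢
        linarith
      | zero => simp
      | add a b ha hb iha ihb => rw [map_add, inner_add_left, iha, ihb]; ring
      | smul c a ha iha => rw [map_smul, inner_smul_left, iha]; simp
    refine ⟨⟨v, hvS⟩, ?_⟩
    refine Subtype.ext ?_
    show ((v, fun t => -∑ i, ((repT t) i : ℝ) * v i) : _ × _) = (v, g)
    refine Prod.ext rfl ?_
    funext t
    have hclst : cls ⟨repT t, hrepT1 t⟩ = t := by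
      refine Subtype.ext ?_
      exact (hrepT2 t).symm
    have := hz0 ⟨repT t, hrepT1 t⟩
    rw [hclst] at this
    simp only
    linarith
  have hfinrank_ker : Module.finrank ℝ ↥(LinearMap.ker Ψ) = Module.finrank ℝ ↥(S₂ᗮ) :=
    ((LinearEquiv.ofBijective Jk ⟨hJinj, hJsurj⟩).finrank_eq).symm
  have hrank1 : Module.finrank ℝ ↥(LinearMap.range Ψ) + Module.finrank ℝ ↥(LinearMap.ker Ψ)
      = Module.finrank ℝ (EuclideanSpace ℝ (Fin m) × (↥Ts → ℝ)) :=
    LinearMap.finrank_range_add_finrank_ker Ψ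
  have hdom : Module.finrank ℝ (EuclideanSpace ℝ (Fin m) × (↥Ts → ℝ))
      = m + Fintype.card ↥Ts := by
    rw [Module.finrank_prod, finrank_euclideanSpace, Module.finrank_pi]
    simp
  have horthrank : Module.finrank ℝ ↥S₂ + Module.finrank ℝ ↥(S₂ᗮ) = m := by
    have := S₂.finrank_add_finrank_orthogonal
    rwa [finrank_euclideanSpace, Fintype.card_fin] at this
  have hS₂Sp : Module.finrank ℝ ↥S₂ = Module.finrank ℝ ↥Sp :=
    LinearEquiv.finrank_map_eq L Sp
  have hncardC : (dzC y y').ncard = Fintype.card ↥(dzC y y') := by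
    rw [Set.ncard_eq_toFinset_card', Set.toFinset_card]
  have hncardT : Ts.ncard = Fintype.card ↥Ts := by
    rw [Set.ncard_eq_toFinset_card', Set.toFinset_card]
  have hcard : Fintype.card ↥(dzC y y') = Fintype.card ↥Ts + Module.finrank ℝ ↥Sp := by
    rw [← hncardC, ← hncardT]
    exact hdef
  have hcod : Module.finrank ℝ (↥(dzC y y') → ℝ) = Fintype.card ↥(dzC y y') := by
    rw [Module.finrank_pi]
  have htop : LinearMap.range Ψ = ⊤ := by
    apply Submodule.eq_top_of_finrank_eq
    rw [hcod]
    omega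
  have hsurj : Function.Surjective Ψ := LinearMap.range_eq_top.mp htop
  obtain ⟨⟨v, g'⟩, hvg⟩ := hsurj (fun z => F ↑z)
  set gAux : Set (Fin m → ℕ) → ℝ := fun s => if h : s ∈ Ts then g' ⟨s, h⟩ else 0 with hgAux
  refine ⟨v, fun z => gAux (dzS y y' z), ?_, ?_⟩
  · intro a b hab
    exact congrArg gAux (dzS_eq hab)
  · intro z hz
    have h1 := congrFun hvg ⟨z, hz⟩
    rw [hΨapp] at h1
    have hmem : dzS y y' z ∈ Ts := ⟨z, hz, rfl⟩
    have h2 : gAux (dzS y y' z) = g' (cls ⟨z, hz⟩) := by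
      simp only [hgAux, dif_pos hmem]
      rfl
    show F z = (∑ i, (z i : ℝ) * v i) + gAux (dzS y y' z)
    rw [h2]
    exact h1.symm
end DZ3


/-- (Deficiency zero theorem.) If the network is weakly reversible
(for each reaction there is a directed path from its product complex back to its
source complex) and has deficiency zero (`|C| = ℓ + s`, where `ℓ` is the number of
linkage classes — the classes of the equivalence relation generated by the edge
relation, restricted to the set of complexes — and `s` is the dimension of the
stoichiometric subspace), then for every choice of positive rate constants there
exists a positive complex balanced equilibrium. -/
theorem stmt18 (m K : ℕ) (y y' : Fin K → Fin m → ℕ)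
    (hyy' : ∀ k, y k ≠ y' k)
    (hwr : ∀ k : Fin K,
      Relation.ReflTransGen (reactionEdge m K y y') (y' k) (y k))
    (hdef : (Set.range y ∪ Set.range y').ncard =
      {t : Set (Fin m → ℕ) | ∃ z ∈ Set.range y ∪ Set.range y',
          t = {w ∈ Set.range y ∪ Set.range y' |
            Relation.EqvGen (reactionEdge m K y y') z w}}.ncard
        + Module.finrank ℝ (Submodule.span ℝ
            (Set.range (fun k : Fin K => fun i : Fin m => ((y' k i : ℝ) - (y k i : ℝ)))))) :
    ∀ κ : Fin K → ℝ, (∀ k, 0 < κ k) →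
      ∃ c : Fin m → ℝ, (∀ i, 0 < c i) ∧ complexBalanced m K y y' κ c := by
  intro κ hκ
  obtain ⟨ψ, hψpos, hψbal⟩ := dz_part1 hwr κ hκ
  have hdef' : (dzC y y').ncard = {t : Set (Fin m → ℕ) | ∃ z ∈ dzC y y', t = dzS y y' z}.ncard
      + Module.finrank ℝ (Submodule.span ℝ
          (Set.range (fun k : Fin K => fun i : Fin m => ((y' k i : ℝ) - (y k i : ℝ))))) := hdef
  obtain ⟨v, g, hginv, hFg⟩ := dz_part2 hdef' (fun z => Real.log (ψ z))
  refine ⟨fun i => Real.exp (v i), fun i => Real.exp_pos _, ?_⟩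
  intro z hz0
  have hz : z ∈ dzC y y' := by
    rcases hz0 with ⟨k, hk⟩ | ⟨k, hk⟩
    · exact Or.inl ⟨k, hk⟩
    · exact Or.inr ⟨k, hk⟩
  have hpow : ∀ w : Fin m → ℕ,
      (∏ i, Real.exp (v i) ^ (w i)) = Real.exp (∑ i, (w i : ℝ) * v i) := by
    intro w
    rw [Real.exp_sum]
    refine Finset.prod_congr rfl fun i _ => ?_
    rw [← Real.exp_nat_mul]
  have hψw : ∀ w ∈ dzC y y',
      ψ w = Real.exp (∑ i, (w i : ℝ) * v i) * Real.exp (g w) := by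
    intro w hw
    have h := hFg w hw
    rw [← Real.exp_log (hψpos w hw)]
    show Real.exp (Real.log (ψ w)) = _
    rw [h, Real.exp_add]
  have hbal := hψbal z hz
  calc ∑ k ∈ Finset.univ.filter (fun k => y' k = z), κ k * ∏ i, Real.exp (v i) ^ y k i
      = ∑ k ∈ Finset.univ.filter (fun k => y' k = z),
          (κ k * ψ (y k)) * Real.exp (-(g z)) := by
        refine Finset.sum_congr rfl fun k hk => ?_
        simp only [Finset.mem_filter] at hk
        have hykC : y k ∈ dzC y y' := Or.inl ⟨k, rfl⟩
        have hgk : g (y k) = g z :=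
          hginv (y k) z (Relation.EqvGen.rel _ _ ⟨k, rfl, hk.2⟩)
        rw [hpow (y k), hψw (y k) hykC, hgk]
        rw [Real.exp_neg]
        field_simp
    _ = ((∑ k ∈ Finset.univ.filter (fun k => y k = z), κ k) * ψ z) * Real.exp (-(g z)) := by
        rw [← Finset.sum_mul, hbal]
    _ = (∑ k ∈ Finset.univ.filter (fun k => y k = z), κ k)
          * Real.exp (∑ i, (z i : ℝ) * v i) := by
        rw [hψw z hz, Real.exp_neg]
        field_simp
    _ = ∑ k ∈ Finset.univ.filter (fun k => y k = z), κ k * ∏ i, Real.exp (v i) ^ y k i := by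
        rw [Finset.sum_mul]
        refine Finset.sum_congr rfl fun k hk => ?_
        simp only [Finset.mem_filter] at hk
        rw [hk.2, hpow z]
end
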